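/- arXiv:1310.1598 — 7 statements merged into one kernel-verified Lean document; each statement's English description precedes it below -/
import Mathlib

section
/- Let K be an infinite field, let n ≥ 2, and let p be a polynomial in m noncommuting variables over K. Suppose p has an evaluation of degree n on the n×n matrices, i.e., there exist matrices b_1,…,b_m ∈ M_n(K) such that the minimal polynomial of p(b_1,…,b_m) has degree n. Then there exist an index i with 1 ≤ i ≤ m and matrices a_1,…,a_m, a_i' ∈ M_n(K) such that the two values p(a_1,…,a_{i-1},a_i,a_{i+1},…,a_m) and p(a_1,…,a_{i-1},a_i',a_{i+1},…,a_m) do not commute. -/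
/-- Evaluation of a noncommutative polynomial `p ∈ K⟨x_1,…,x_m⟩` at matrices
`a_1,…,a_m ∈ M_n(K)`: the image of `p` under the unique `K`-algebra homomorphism
sending `x_i` to `a_i`. -/
noncomputable def ncEval {K : Type*} [Field K] {m n : ℕ}
    (p : FreeAlgebra K (Fin m)) (a : Fin m → Matrix (Fin n) (Fin n) K) :
    Matrix (Fin n) (Fin n) K :=
  FreeAlgebra.lift K a p

open Matrix Polynomial

section Aux
variable {K : Type*} [Field K] {m n : ℕ}

/-- General evaluation over a commutative `K`-algebra `R`. -/
noncomputable def gEval {R : Type*} [CommRing R] [Algebra K R]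
    (p : FreeAlgebra K (Fin m)) (A : Fin m → Matrix (Fin n) (Fin n) R) :
    Matrix (Fin n) (Fin n) R :=
  FreeAlgebra.lift K A p

lemma ncEval_eq_gEval (p : FreeAlgebra K (Fin m)) (a : Fin m → Matrix (Fin n) (Fin n) K) :
    ncEval p a = gEval p a := rfl

lemma gEval_map {R S : Type*} [CommRing R] [Algebra K R] [CommRing S] [Algebra K S]
    (φ : R →ₐ[K] S) (p : FreeAlgebra K (Fin m)) (A : Fin m → Matrix (Fin n) (Fin n) R) :
    (gEval p A).map φ = gEval p (fun i => (A i).map φ) := by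
  have h : (AlgHom.mapMatrix (m := Fin n) φ).comp (FreeAlgebra.lift K A)
      = FreeAlgebra.lift K (fun i => (A i).map φ) := by
    apply FreeAlgebra.hom_ext
    funext i
    simp [FreeAlgebra.lift_ι_apply]
  have := AlgHom.congr_fun h p
  simpa [gEval] using this

/-- Zariski-type density lemma. -/
lemma zariski {σ : Type*} [Infinite K] (g h : MvPolynomial σ K)
    (hne : ∃ v : σ → K, MvPolynomial.eval v h ≠ 0)
    (hv : ∀ v : σ → K, MvPolynomial.eval v h ≠ 0 → MvPolynomial.eval v g = 0) : g = 0 := by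
  obtain ⟨v0, hv0⟩ := hne
  have hgh : g * h = 0 := by
    apply MvPolynomial.funext (q := 0)
    intro x
    by_cases hx : MvPolynomial.eval x h = 0
    · simp [hx]
    · simp [hv x hx]
  have hh : h ≠ 0 := fun h0 => hv0 (by simp [h0])
  rcases mul_eq_zero.mp hgh with h1 | h1
  · exact h1
  · exact absurd h1 hh

/-- Nonderogatory: the first `n` powers are linearly independent (stated as injectivity). -/
def Nondero (M : Matrix (Fin n) (Fin n) K) : Prop :=
  ∀ t : Fin n → K, (∑ k : Fin n, t k • M ^ (k : ℕ)) = 0 → t = 0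

lemma nondero_of_minpoly_natDegree {M : Matrix (Fin n) (Fin n) K} (hn : 2 ≤ n)
    (h : (minpoly K M).natDegree = n) : Nondero M := by
  intro t ht
  by_contra htne
  set q : K[X] := ∑ k : Fin n, Polynomial.monomial (k : ℕ) (t k) with hq
  have haev : Polynomial.aeval M q = 0 := by
    rw [hq, map_sum]
    rw [← ht]
    congr 1
    funext k
    simp [Polynomial.aeval_monomial, Algebra.algebraMap_eq_smul_one, smul_mul_assoc]
  have hcoeff : ∀ j : ℕ, q.coeff j = if hj : j < n then t ⟨j, hj⟩ else 0 := by
    intro j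
    rw [hq, Polynomial.finset_sum_coeff]
    split
    case isTrue hj =>
      rw [Finset.sum_eq_single (⟨j, hj⟩ : Fin n)]
      · simp
      · intro k _ hk
        rw [Polynomial.coeff_monomial, if_neg]
        exact fun hkj => hk (Fin.ext hkj)
      · simp
    case isFalse hj =>
      apply Finset.sum_eq_zero
      intro k _
      rw [Polynomial.coeff_monomial, if_neg]
      exact fun hkj => hj (hkj ▸ k.isLt)
  have hqne : q ≠ 0 := by
    obtain ⟨k, hk⟩ := Function.ne_iff.mp htne
    intro h0
    apply hk
    have := hcoeff k
    rw [h0] at this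
    simpa [k.isLt] using this.symm
  have hdvd : minpoly K M ∣ q := minpoly.dvd K M haev
  have h1 : (minpoly K M).natDegree ≤ q.natDegree := Polynomial.natDegree_le_of_dvd hdvd hqne
  have h2 : q.natDegree ≤ n - 1 := by
    apply Polynomial.natDegree_le_iff_coeff_eq_zero.mpr
    intro j hj
    rw [hcoeff j, dif_neg]
    omega
  omega

lemma minpoly_natDegree_of_nondero {M : Matrix (Fin n) (Fin n) K} (hn : 1 ≤ n)
    (h : Nondero M) : (minpoly K M).natDegree = n := by
  have hint : IsIntegral K M := Algebra.IsIntegral.isIntegral M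
  have hle : (minpoly K M).natDegree ≤ n := by
    have hdvd : minpoly K M ∣ M.charpoly := minpoly.dvd K M (Matrix.aeval_self_charpoly M)
    have hcne : M.charpoly ≠ 0 := (Matrix.charpoly_monic M).ne_zero
    have := Polynomial.natDegree_le_of_dvd hdvd hcne
    simpa [Matrix.charpoly_natDegree_eq_dim] using this
  by_contra hne
  have hlt : (minpoly K M).natDegree < n := lt_of_le_of_ne hle hne
  set t : Fin n → K := fun k => (minpoly K M).coeff (k : ℕ) with hT
  have hsum : (∑ k : Fin n, t k • M ^ (k : ℕ)) = 0 := by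
    have := Polynomial.aeval_eq_sum_range' hlt M
    rw [minpoly.aeval] at this
    rw [← Fin.sum_univ_eq_sum_range (fun k => (minpoly K M).coeff k • M ^ k) n] at this
    exact this.symm
  have ht0 := h t hsum
  have hmon := (minpoly.monic hint).leadingCoeff
  rw [Polynomial.leadingCoeff] at hmon
  have hd : (minpoly K M).natDegree < n := hlt
  have : t ⟨(minpoly K M).natDegree, hd⟩ = 1 := by simpa [hT] using hmon
  rw [ht0] at this
  simp at this
end Aux

section Ord
variable {K : Type*} [Field K] {n : ℕ}

lemma sum_mulVec' {ι : Type*} (s : Finset ι) (A : ι → Matrix (Fin n) (Fin n) K) (v : Fin n → K) :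
    (∑ i ∈ s, A i) *ᵥ v = ∑ i ∈ s, (A i *ᵥ v) := by
  classical
  induction s using Finset.induction with
  | empty => simp [Matrix.zero_mulVec]
  | insert _ _ hx ih =>
    rw [Finset.sum_insert hx, Finset.sum_insert hx, Matrix.add_mulVec, ih]

lemma mulVec_ext {A B : Matrix (Fin n) (Fin n) K} (h : ∀ v, A *ᵥ v = B *ᵥ v) : A = B := by
  ext i j
  have := congrFun (h (Pi.single j 1)) i
  simpa [Matrix.mulVec_single] using this

variable (M : Matrix (Fin n) (Fin n) K)

lemma aeval_mulVec_mul (q r : K[X]) (v : Fin n → K) :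
    (aeval M (q * r)) *ᵥ v = (aeval M q) *ᵥ ((aeval M r) *ᵥ v) := by
  rw [_root_.map_mul, ← Matrix.mulVec_mulVec]

lemma kills_mul (q r : K[X]) (v : Fin n → K) (h : (aeval M r) *ᵥ v = 0) :
    (aeval M (q * r)) *ᵥ v = 0 := by
  rw [aeval_mulVec_mul, h, Matrix.mulVec_zero]

/-- The annihilator ideal of a vector under the action of `M`. -/
def annI (v : Fin n → K) : Ideal K[X] where
  carrier := {q | (aeval M q) *ᵥ v = 0}
  add_mem' := by
    intro a b ha hb
    simp only [Set.mem_setOf_eq, _root_.map_add, Matrix.add_mulVec] at *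
    rw [ha, hb, add_zero]
  zero_mem' := by simp
  smul_mem' := by
    intro c q hq
    simp only [Set.mem_setOf_eq, smul_eq_mul] at *
    exact kills_mul M c q v hq

/-- The "order" of a vector: a generator of its annihilator ideal. -/
noncomputable def ordp (v : Fin n → K) : K[X] :=
  Submodule.IsPrincipal.generator (annI M v)

lemma ordp_dvd_iff {v : Fin n → K} {q : K[X]} :
    ordp M v ∣ q ↔ (aeval M q) *ᵥ v = 0 :=
  (Submodule.IsPrincipal.mem_iff_generator_dvd (annI M v)).symm

lemma ordp_kills (v : Fin n → K) : (aeval M (ordp M v)) *ᵥ v = 0 :=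
  (ordp_dvd_iff M).mp dvd_rfl

lemma ordp_dvd_minpoly (v : Fin n → K) : ordp M v ∣ minpoly K M := by
  rw [ordp_dvd_iff]
  simp [minpoly.aeval]

lemma minpoly_ne_zero' : minpoly K M ≠ 0 :=
  minpoly.ne_zero (Algebra.IsIntegral.isIntegral M)

lemma ordp_ne_zero (v : Fin n → K) : ordp M v ≠ 0 := by
  intro h0
  have := ordp_dvd_minpoly M v
  rw [h0, zero_dvd_iff] at this
  exact minpoly_ne_zero' M this

/-- Existence of a cyclic vector for a matrix whose minimal polynomial has degree `n`. -/
lemma exists_cyclic (hdeg : (minpoly K M).natDegree = n) :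
    ∃ v : Fin n → K, ∀ t : Fin n → K, (∑ k : Fin n, t k • (M ^ (k : ℕ) *ᵥ v)) = 0 → t = 0 := by
  classical
  have hbd : ∀ w : Fin n → K, (ordp M w).natDegree ≤ n := by
    intro w
    have := Polynomial.natDegree_le_of_dvd (ordp_dvd_minpoly M w) (minpoly_ne_zero' M)
    omega
  obtain ⟨v, hv⟩ : ∃ w : Fin n → K,
      (ordp M w).natDegree = Nat.findGreatest (fun d => ∃ w : Fin n → K, (ordp M w).natDegree = d) n :=
    (Nat.findGreatest_spec (P := fun d => ∃ w : Fin n → K, (ordp M w).natDegree = d)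
      (hbd 0) ⟨0, rfl⟩)
  have hmax : ∀ w : Fin n → K, (ordp M w).natDegree ≤ (ordp M v).natDegree := by
    intro w
    rw [hv]
    exact Nat.le_findGreatest (hbd w) ⟨w, rfl⟩
  clear hv
  -- every order divides the maximal one
  have hdvdall : ∀ w : Fin n → K, ordp M w ∣ ordp M v := by
    intro w
    by_contra hnd
    have hgw0 : ordp M w ≠ 0 := ordp_ne_zero M w
    have hgv0 : ordp M v ≠ 0 := ordp_ne_zero M v
    have hdgw : EuclideanDomain.gcd (ordp M w) (ordp M v) ∣ ordp M w :=
      EuclideanDomain.gcd_dvd_left _ _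
    have hdgv : EuclideanDomain.gcd (ordp M w) (ordp M v) ∣ ordp M v :=
      EuclideanDomain.gcd_dvd_right _ _
    set d := EuclideanDomain.gcd (ordp M w) (ordp M v) with hdd
    have hd0 : d ≠ 0 := fun h => hgw0 (by rw [h] at hdgw; exact zero_dvd_iff.mp hdgw)
    obtain ⟨e, he⟩ := hdgw
    have heu : ¬IsUnit e := by
      intro hu
      apply hnd
      obtain ⟨e', he'⟩ := hu.exists_right_inv
      have hwd : ordp M w ∣ d := by
        refine ⟨e', ?_⟩
        rw [he, mul_assoc, he', mul_one]  -- d = w * e' ; careful direction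
      exact hwd.trans hdgv
    have he0 : e ≠ 0 := fun h => hgw0 (by rw [he, h, mul_zero])
    obtain ⟨p, hp, hpe⟩ := WfDvdMonoid.exists_irreducible_factor heu he0
    have hpdeg : 0 < p.natDegree := hp.natDegree_pos
    -- maximal power of p dividing d
    have hQbound : ∀ j, p ^ j ∣ d → j ≤ n := by
      intro j hj
      have h1 : (p ^ j).natDegree ≤ d.natDegree := Polynomial.natDegree_le_of_dvd hj hd0
      have h2 : d.natDegree ≤ n := le_trans
        (Polynomial.natDegree_le_of_dvd hdgv hgv0) (hbd v)
      have h3 : (p ^ j).natDegree = j * p.natDegree := Polynomial.natDegree_pow p j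
      have h4 : j ≤ j * p.natDegree := Nat.le_mul_of_pos_right j hpdeg
      omega
    haveI : DecidablePred (fun j : ℕ => p ^ j ∣ d) := Classical.decPred _
    set b := Nat.findGreatest (fun j => p ^ j ∣ d) n with hbdef
    have hQb : p ^ b ∣ d :=
      Nat.findGreatest_spec (P := fun j => p ^ j ∣ d) (Nat.zero_le n) (by simp)
    have hQb1 : ¬p ^ (b + 1) ∣ d := by
      intro hcon
      have := Nat.le_findGreatest (P := fun j => p ^ j ∣ d) (hQbound (b + 1) hcon) hcon
      rw [← hbdef] at this
      omega
    obtain ⟨e', he'⟩ := hpe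
    have hpb1gw : p ^ (b + 1) ∣ ordp M w := by
      obtain ⟨d', hd'⟩ := hQb
      refine ⟨d' * e', ?_⟩
      rw [he, hd', he']
      ring
    have hpb1gv : ¬p ^ (b + 1) ∣ ordp M v := fun hcon =>
      hQb1 (EuclideanDomain.dvd_gcd hpb1gw hcon)
    obtain ⟨s, hs⟩ : p ^ b ∣ ordp M v := hQb.trans hdgv
    have hs0 : s ≠ 0 := fun h => hgv0 (by rw [hs, h, mul_zero])
    have hps : ¬p ∣ s := by
      intro hcon
      apply hpb1gv
      obtain ⟨s', hs'⟩ := hcon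
      exact ⟨s', by rw [hs, hs']; ring⟩
    have hcop : IsCoprime (p ^ (b + 1)) s := (hp.coprime_iff_not_dvd.mpr hps).pow_left
    obtain ⟨q, hq⟩ := hpb1gw
    have hq0 : q ≠ 0 := fun h => hgw0 (by rw [hq, h, mul_zero])
    -- the two vectors with coprime orders
    have hu_kill : (aeval M s) *ᵥ ((aeval M (p ^ b)) *ᵥ v) = 0 := by
      rw [← aeval_mulVec_mul]
      have hcomm : s * p ^ b = ordp M v := by rw [hs]; ring
      rw [hcomm]
      exact ordp_kills M v
    have hu_min : ∀ r : K[X], (aeval M r) *ᵥ ((aeval M (p ^ b)) *ᵥ v) = 0 → s ∣ r := by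
      intro r hr
      rw [← aeval_mulVec_mul] at hr
      have hdv : ordp M v ∣ r * p ^ b := (ordp_dvd_iff M).mpr hr
      rw [hs, mul_comm r (p ^ b)] at hdv
      exact (mul_dvd_mul_iff_left (pow_ne_zero b hp.ne_zero)).mp hdv
    have hw_kill : (aeval M (p ^ (b + 1))) *ᵥ ((aeval M q) *ᵥ w) = 0 := by
      rw [← aeval_mulVec_mul, ← hq]
      exact ordp_kills M w
    have hw_min : ∀ r : K[X], (aeval M r) *ᵥ ((aeval M q) *ᵥ w) = 0 → p ^ (b + 1) ∣ r := by
      intro r hr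
      rw [← aeval_mulVec_mul] at hr
      have hdv : ordp M w ∣ r * q := (ordp_dvd_iff M).mpr hr
      rw [hq, mul_comm r q, mul_comm (p ^ (b+1)) q] at hdv
      exact (mul_dvd_mul_iff_left hq0).mp hdv
    set u : Fin n → K := (aeval M (p ^ b)) *ᵥ v with hudef
    set w' : Fin n → K := (aeval M q) *ᵥ w with hwdef
    set z : Fin n → K := u + w' with hzdef
    set r := ordp M z with hrdef
    have hrz : (aeval M r) *ᵥ z = 0 := ordp_kills M z
    have hmv : ∀ g : K[X], (aeval M g) *ᵥ z = (aeval M g) *ᵥ u + (aeval M g) *ᵥ w' := by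
      intro g
      rw [hzdef, Matrix.mulVec_add]
    -- s divides r
    have hsr : s ∣ r * (p ^ (b + 1)) := by
      apply hu_min (r * (p ^ (b + 1)))
      have h1 : (aeval M (r * p ^ (b + 1))) *ᵥ z = 0 := by
        rw [mul_comm]
        exact kills_mul M _ _ _ hrz
      have h2 : (aeval M (r * p ^ (b + 1))) *ᵥ w' = 0 := by
        rw [aeval_mulVec_mul]
        rw [hw_kill, Matrix.mulVec_zero]
      have h3 := hmv (r * p ^ (b + 1))
      rw [h1, h2, add_zero] at h3
      rw [← aeval_mulVec_mul] at h3 ⊢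
      exact h3.symm
    have hpr : p ^ (b + 1) ∣ r * s := by
      apply hw_min (r * s)
      have h1 : (aeval M (r * s)) *ᵥ z = 0 := by
        rw [mul_comm]
        exact kills_mul M _ _ _ hrz
      have h2 : (aeval M (r * s)) *ᵥ u = 0 := by
        rw [aeval_mulVec_mul, hu_kill, Matrix.mulVec_zero]
      have h3 := hmv (r * s)
      rw [h1, h2, zero_add] at h3
      rw [← aeval_mulVec_mul] at h3 ⊢
      exact h3.symm
    have hsr' : s ∣ r := hcop.symm.dvd_of_dvd_mul_right hsr
    have hpr' : p ^ (b + 1) ∣ r := hcop.dvd_of_dvd_mul_right hpr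
    have hmul : p ^ (b + 1) * s ∣ r := hcop.mul_dvd hpr' hsr'
    have hr0 : r ≠ 0 := ordp_ne_zero M z
    have hdeg1 : (p ^ (b + 1) * s).natDegree ≤ r.natDegree :=
      Polynomial.natDegree_le_of_dvd hmul hr0
    have hdeg2 : (p ^ (b + 1) * s).natDegree = (b + 1) * p.natDegree + s.natDegree := by
      rw [Polynomial.natDegree_mul (pow_ne_zero _ hp.ne_zero) hs0, Polynomial.natDegree_pow]
    have hdeg3 : (ordp M v).natDegree = b * p.natDegree + s.natDegree := by
      rw [hs, Polynomial.natDegree_mul (pow_ne_zero _ hp.ne_zero) hs0, Polynomial.natDegree_pow]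
    have hle := hmax z
    have e1 : (b + 1) * p.natDegree = b * p.natDegree + p.natDegree := by ring
    rw [e1] at hdeg2
    have := hpdeg
    linarith
  -- now ordp M v has degree n and v is cyclic
  have hkillall : aeval M (ordp M v) = 0 := by
    apply mulVec_ext (B := 0)
    intro w
    rw [Matrix.zero_mulVec]
    exact (ordp_dvd_iff M).mp (hdvdall w)
  have hmdvd : minpoly K M ∣ ordp M v := minpoly.dvd K M hkillall
  have hdeg_v : (ordp M v).natDegree = n := by
    have h1 := Polynomial.natDegree_le_of_dvd hmdvd (ordp_ne_zero M v)
    have h2 := Polynomial.natDegree_le_of_dvd (ordp_dvd_minpoly M v) (minpoly_ne_zero' M)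
    omega
  refine ⟨v, ?_⟩
  intro t ht
  by_contra htne
  obtain ⟨k0, hk0⟩ := Function.ne_iff.mp htne
  have hn1 : 1 ≤ n := by have := k0.isLt; omega
  set q : K[X] := ∑ k : Fin n, Polynomial.monomial (k : ℕ) (t k) with hqd
  have haev : (aeval M q) *ᵥ v = 0 := by
    rw [hqd, map_sum, sum_mulVec']
    rw [← ht]
    congr 1
    funext k
    rw [Polynomial.aeval_monomial, Algebra.algebraMap_eq_smul_one, smul_mul_assoc, one_mul,
      Matrix.smul_mulVec]
  have hcoeff : ∀ j : ℕ, q.coeff j = if hj : j < n then t ⟨j, hj⟩ else 0 := by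
    intro j
    rw [hqd, Polynomial.finset_sum_coeff]
    split
    case isTrue hj =>
      rw [Finset.sum_eq_single (⟨j, hj⟩ : Fin n)]
      · simp
      · intro k _ hk
        rw [Polynomial.coeff_monomial, if_neg]
        exact fun hkj => hk (Fin.ext hkj)
      · simp
    case isFalse hj =>
      apply Finset.sum_eq_zero
      intro k _
      rw [Polynomial.coeff_monomial, if_neg]
      exact fun hkj => hj (hkj ▸ k.isLt)
  have hqne : q ≠ 0 := by
    intro h0
    apply hk0
    have := hcoeff k0
    rw [h0] at this
    simpa [k0.isLt] using this.symm
  have hdvd : ordp M v ∣ q := (ordp_dvd_iff M).mpr haev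
  have h1 : n ≤ q.natDegree := hdeg_v ▸ Polynomial.natDegree_le_of_dvd hdvd hqne
  have h2 : q.natDegree ≤ n - 1 := by
    apply Polynomial.natDegree_le_iff_coeff_eq_zero.mpr
    intro j hj
    rw [hcoeff j, dif_neg]
    omega
  omega

end Ord

section Cent
variable {K : Type*} [Field K] {n : ℕ}

lemma mulVec_sum'' (B : Matrix (Fin n) (Fin n) K) {ι : Type*} (s : Finset ι)
    (f : ι → (Fin n → K)) : B *ᵥ (∑ j ∈ s, f j) = ∑ j ∈ s, B *ᵥ f j := by
  classical
  induction s using Finset.induction with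
  | empty => simp
  | insert _ _ hx ih => rw [Finset.sum_insert hx, Finset.sum_insert hx, Matrix.mulVec_add, ih]

lemma aeval_monomial_sum (M : Matrix (Fin n) (Fin n) K) (t : Fin n → K) :
    aeval M (∑ k : Fin n, Polynomial.monomial (k : ℕ) (t k)) = ∑ k : Fin n, t k • M ^ (k : ℕ) := by
  rw [map_sum]
  congr 1
  funext k
  rw [Polynomial.aeval_monomial, Algebra.algebraMap_eq_smul_one, smul_mul_assoc, one_mul]

lemma exists_poly_of_commute {M B : Matrix (Fin n) (Fin n) K} (hn : 1 ≤ n)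
    (hM : Nondero M) (hB : Commute B M) : ∃ q : K[X], B = aeval M q := by
  obtain ⟨v, hv⟩ := exists_cyclic M (minpoly_natDegree_of_nondero hn hM)
  -- surjectivity of the cyclic map
  set W : Matrix (Fin n) (Fin n) K := Matrix.of (fun i k => (M ^ (k : ℕ) *ᵥ v) i) with hW
  have hWmul : ∀ t : Fin n → K, W *ᵥ t = ∑ k : Fin n, t k • (M ^ (k : ℕ) *ᵥ v) := by
    intro t
    funext i
    simp only [Matrix.mulVec, dotProduct, hW, Matrix.of_apply, Finset.sum_apply,
      Pi.smul_apply, smul_eq_mul]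
    exact Finset.sum_congr rfl fun k _ => mul_comm _ _
  have hinj : Function.Injective W.mulVecLin := by
    rw [← LinearMap.ker_eq_bot]
    apply LinearMap.ker_eq_bot'.mpr
    intro t ht
    apply hv
    rw [← hWmul t]
    simpa [Matrix.mulVecLin] using ht
  have hsurj : Function.Surjective W.mulVecLin := LinearMap.injective_iff_surjective.mp hinj
  obtain ⟨t, htv⟩ := hsurj (B *ᵥ v)
  have htv' : (∑ k : Fin n, t k • (M ^ (k : ℕ) *ᵥ v)) = B *ᵥ v := by
    rw [← hWmul t]
    simpa [Matrix.mulVecLin] using htv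
  set q : K[X] := ∑ k : Fin n, Polynomial.monomial (k : ℕ) (t k) with hq
  set N := aeval M q with hN
  have hNv : N *ᵥ v = B *ᵥ v := by
    rw [hN, hq, aeval_monomial_sum, sum_mulVec']
    rw [← htv']
    congr 1
    funext k
    rw [Matrix.smul_mulVec]
  have hNM1 : Commute N M := by
    have e1 : N * M = aeval M (q * X) := by rw [_root_.map_mul, aeval_X, hN]
    have e2 : M * N = aeval M (X * q) := by rw [_root_.map_mul, aeval_X, hN]
    unfold Commute SemiconjBy
    rw [e1, e2, mul_comm q X]
  have hNM : ∀ j : ℕ, N * M ^ j = M ^ j * N := fun j => (hNM1.pow_right j).eq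
  refine ⟨q, ?_⟩
  apply mulVec_ext
  intro z
  obtain ⟨s, hsz⟩ := hsurj z
  have hsz' : (∑ j : Fin n, s j • (M ^ (j : ℕ) *ᵥ v)) = z := by
    rw [← hWmul s]
    simpa [Matrix.mulVecLin] using hsz
  rw [← hsz']
  have key : ∀ j : ℕ, B *ᵥ (M ^ j *ᵥ v) = N *ᵥ (M ^ j *ᵥ v) := by
    intro j
    rw [Matrix.mulVec_mulVec, Matrix.mulVec_mulVec]
    rw [(hB.pow_right j).eq, hNM j]
    rw [← Matrix.mulVec_mulVec, ← Matrix.mulVec_mulVec, hNv]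
  calc B *ᵥ ∑ j : Fin n, s j • (M ^ (j : ℕ) *ᵥ v)
      = ∑ j : Fin n, s j • (B *ᵥ (M ^ (j : ℕ) *ᵥ v)) := by
        rw [mulVec_sum'']
        congr 1
        funext j
        rw [Matrix.mulVec_smul]
    _ = ∑ j : Fin n, s j • (N *ᵥ (M ^ (j : ℕ) *ᵥ v)) := by
        congr 1
        funext j
        rw [key j]
    _ = N *ᵥ ∑ j : Fin n, s j • (M ^ (j : ℕ) *ᵥ v) := by
        rw [mulVec_sum'']
        congr 1
        funext j
        rw [Matrix.mulVec_smul]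

lemma centralizer_comm {M B C : Matrix (Fin n) (Fin n) K} (hn : 1 ≤ n)
    (hM : Nondero M) (hB : Commute B M) (hC : Commute C M) : Commute B C := by
  obtain ⟨q, hq⟩ := exists_poly_of_commute hn hM hB
  obtain ⟨r, hr⟩ := exists_poly_of_commute hn hM hC
  rw [hq, hr]
  unfold Commute SemiconjBy
  rw [← _root_.map_mul, ← _root_.map_mul, mul_comm q r]
end Cent

section Density
variable {K : Type*} [Field K] {m n : ℕ}

/-- The density step: commutation spreads from `S.erase i`-perturbations to
`S`-perturbations. -/
lemma density_step [Infinite K] (hn : 1 ≤ n) (p : FreeAlgebra K (Fin m))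
    (i : Fin m) (S : Finset (Fin m)) (hi : i ∈ S)
    (H1 : ∀ (a : Fin m → Matrix (Fin n) (Fin n) K) (c : Matrix (Fin n) (Fin n) K),
      Commute (ncEval p a) (ncEval p (Function.update a i c)))
    (HIH : ∀ x y : Fin m → Matrix (Fin n) (Fin n) K,
      (∀ j ∉ S.erase i, x j = y j) → Commute (ncEval p x) (ncEval p y))
    (b : Fin m → Matrix (Fin n) (Fin n) K) (hb : Nondero (ncEval p b)) :
    ∀ x y : Fin m → Matrix (Fin n) (Fin n) K,
      (∀ j ∉ S, x j = y j) → Commute (ncEval p x) (ncEval p y) := by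
  classical
  set σk := (Fin m × Fin n × Fin n) ⊕ (Fin m × Fin n × Fin n) with hσ
  -- generic matrices
  set XX : Fin m → Matrix (Fin n) (Fin n) (MvPolynomial σk K) :=
    fun j => Matrix.of fun r c => MvPolynomial.X (Sum.inl (j, r, c)) with hXX
  set YY : Fin m → Matrix (Fin n) (Fin n) (MvPolynomial σk K) :=
    fun j => if j ∈ S then Matrix.of fun r c => MvPolynomial.X (Sum.inr (j, r, c)) else XX j
    with hYY
  set AA : Fin m → Matrix (Fin n) (Fin n) (MvPolynomial σk K) := Function.update XX i (YY i) with hAA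
  -- specializations
  let ev : (σk → K) → (MvPolynomial σk K →ₐ[K] K) := fun v => MvPolynomial.aeval v
  let xV : (σk → K) → Fin m → Matrix (Fin n) (Fin n) K := fun v j => (XX j).map (ev v)
  let yV : (σk → K) → Fin m → Matrix (Fin n) (Fin n) K := fun v j => (YY j).map (ev v)
  let aV : (σk → K) → Fin m → Matrix (Fin n) (Fin n) K := fun v j => (AA j).map (ev v)
  have haV : ∀ v, aV v = Function.update (xV v) i (yV v i) := by
    intro v
    funext j
    by_cases hj : j = i
    · subst hj
      simp only [aV, hAA, Function.update_self]
      rfl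
    · simp only [aV, hAA, Function.update_of_ne hj]
      rfl
  have hyV : ∀ v j, j ∉ S.erase i → yV v j = (Function.update (xV v) i (yV v i)) j := by
    intro v j hj
    by_cases hji : j = i
    · subst hji
      rw [Function.update_self]
    · have hjS : j ∉ S := fun hS => hj (Finset.mem_erase.mpr ⟨hji, hS⟩)
      rw [Function.update_of_ne hji]
      simp only [yV, xV, hYY, if_neg hjS]
  -- maps of gEval
  have hmap1 : ∀ v, (gEval p XX).map (ev v) = ncEval p (xV v) := by
    intro v
    rw [gEval_map (ev v) p XX]
    rfl
  have hmap2 : ∀ v, (gEval p YY).map (ev v) = ncEval p (yV v) := by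
    intro v
    rw [gEval_map (ev v) p YY]
    rfl
  have hmap3 : ∀ v, (gEval p AA).map (ev v) = ncEval p (aV v) := by
    intro v
    rw [gEval_map (ev v) p AA]
    rfl
  -- left inverse of the powers map at the witness
  set A0 := ncEval p b with hA0
  let Φ : (Fin n → K) →ₗ[K] Matrix (Fin n) (Fin n) K :=
    { toFun := fun t => ∑ k : Fin n, t k • A0 ^ (k : ℕ)
      map_add' := by
        intro a b
        simp [add_smul, Finset.sum_add_distrib]
      map_smul' := by
        intro c a
        simp [smul_smul, Finset.smul_sum] }
  have hΦinj : LinearMap.ker Φ = ⊥ := by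
    apply LinearMap.ker_eq_bot'.mpr
    intro t ht
    exact hb t ht
  obtain ⟨L, hL⟩ := Φ.exists_leftInverse_of_injective hΦinj
  -- polynomial version of L
  let Lpoly : Matrix (Fin n) (Fin n) (MvPolynomial σk K) → Fin n → (MvPolynomial σk K) := fun N k =>
    ∑ r : Fin n, ∑ c : Fin n, N r c * MvPolynomial.C (L (Matrix.single r c 1) k)
  have hLpoly : ∀ (N : Matrix (Fin n) (Fin n) (MvPolynomial σk K)) (v : σk → K) (k : Fin n),
      (ev v) (Lpoly N k) = L (N.map (ev v)) k := by
    intro N v k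
    have hexp : N.map (ev v) = ∑ r : Fin n, ∑ c : Fin n,
        ((ev v) (N r c)) • Matrix.single r c (1 : K) := by
      conv_lhs => rw [Matrix.matrix_eq_sum_single (N.map (ev v))]
      congr 1
      funext r
      congr 1
      funext c
      rw [Matrix.smul_single, smul_eq_mul, mul_one]
      rfl
    have lhs : (ev v) (Lpoly N k)
        = ∑ r : Fin n, ∑ c : Fin n, ((ev v) (N r c)) * L (Matrix.single r c 1) k := by
      simp only [Lpoly, map_sum, _root_.map_mul]
      congr 1; funext r; congr 1; funext c
      congr 1
      simp [ev]
    have rhs : L (N.map (ev v)) k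
        = ∑ r : Fin n, ∑ c : Fin n, ((ev v) (N r c)) * L (Matrix.single r c 1) k := by
      rw [hexp]
      rw [map_sum L, Finset.sum_apply]
      congr 1; funext r
      rw [map_sum L, Finset.sum_apply]
      congr 1; funext c
      rw [LinearMap.map_smul]
      simp
    rw [lhs, rhs]
  -- the determinant polynomial
  have hmul' : ∀ (v : σk → K) (P Q : Matrix (Fin n) (Fin n) (MvPolynomial σk K)),
      (P * Q).map (ev v) = P.map (ev v) * Q.map (ev v) := by
    intro v P Q
    ext r c
    simp [Matrix.map_apply, Matrix.mul_apply]
  set PA := gEval p AA with hPA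
  have hpowmap : ∀ (v : σk → K) (l : ℕ), (PA ^ l).map (ev v) = ((PA).map (ev v)) ^ l := by
    intro v l
    induction l with
    | zero =>
      simp only [pow_zero]
      exact Matrix.map_one _ (map_zero _) (map_one _)
    | succ l ih =>
      rw [pow_succ, pow_succ, hmul', ih]
  set D : Matrix (Fin n) (Fin n) (MvPolynomial σk K) :=
    Matrix.of (fun k l : Fin n => Lpoly (PA ^ (l : ℕ)) k) with hD
  have hDmap : ∀ v : σk → K, D.map (ev v) =
      Matrix.of (fun k l : Fin n => L ((ncEval p (aV v)) ^ (l : ℕ)) k) := by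
    intro v
    ext k l
    simp only [Matrix.map_apply, hD, Matrix.of_apply]
    rw [hLpoly, hpowmap, hmap3]
  -- h ≠ 0 at the witness point
  set v0 : σk → K := Sum.elim (fun z => b z.1 z.2.1 z.2.2) (fun z => b z.1 z.2.1 z.2.2) with hv0
  have hxv0 : xV v0 = b := by
    funext j
    ext r c
    simp [xV, hXX, Matrix.map_apply, ev, MvPolynomial.aeval_X, hv0]
  have hyv0 : yV v0 = b := by
    funext j
    ext r c
    by_cases hj : j ∈ S
    · show ((if j ∈ S then Matrix.of (fun r c => MvPolynomial.X (σ := σk) (Sum.inr (j, r, c)))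
        else XX j).map (ev v0)) r c = b j r c
      rw [if_pos hj]
      simp [Matrix.map_apply, ev, hv0]
    · show ((if j ∈ S then Matrix.of (fun r c => MvPolynomial.X (σ := σk) (Sum.inr (j, r, c)))
        else XX j).map (ev v0)) r c = b j r c
      rw [if_neg hj]
      simp [hXX, Matrix.map_apply, ev, hv0]
  have hav0 : aV v0 = b := by
    rw [haV, hxv0]
    have : yV v0 i = b i := by rw [hyv0]
    rw [this]
    exact Function.update_eq_self i b
  have hDv0 : D.map (ev v0) = (1 : Matrix (Fin n) (Fin n) K) := by
    rw [hDmap v0, hav0]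
    ext k l
    have hΦl : Φ (Pi.single l 1) = A0 ^ (l : ℕ) := by
      show (∑ k : Fin n, (Pi.single l 1 : Fin n → K) k • A0 ^ (k : ℕ)) = A0 ^ (l : ℕ)
      rw [Finset.sum_eq_single l]
      · simp
      · intro k _ hk
        rw [Pi.single_eq_of_ne hk, zero_smul]
      · simp
    have hid : L (A0 ^ (l : ℕ)) = Pi.single l 1 := by
      rw [← hΦl]
      have := LinearMap.congr_fun hL (Pi.single l 1)
      simpa using this
    simp only [Matrix.of_apply, hA0]
    rw [hid, Matrix.one_apply, Pi.single_apply]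
  have hdet0 : MvPolynomial.eval v0 D.det ≠ 0 := by
    have : (ev v0) D.det = ((D.map (ev v0)).det) :=
      RingHom.map_det ((ev v0) : MvPolynomial σk K →+* K) D
    rw [hDv0] at this
    have heq : MvPolynomial.eval v0 D.det = (ev v0) D.det := by
      rw [← MvPolynomial.coe_aeval_eq_eval]
      rfl
    rw [heq, this, Matrix.det_one]
    exact one_ne_zero
  -- nonvanishing implies nonderogatory
  have hnd : ∀ v : σk → K, MvPolynomial.eval v D.det ≠ 0 → Nondero (ncEval p (aV v)) := by
    intro v hv t ht
    have hDt : (D.map (ev v)) *ᵥ t = 0 := by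
      funext k
      rw [hDmap v]
      show (∑ l : Fin n, L ((ncEval p (aV v)) ^ (l : ℕ)) k * t l) = 0
      have : ∀ l : Fin n, L ((ncEval p (aV v)) ^ (l : ℕ)) k * t l
          = (L (t l • (ncEval p (aV v)) ^ (l : ℕ))) k := by
        intro l
        rw [LinearMap.map_smul]
        simp [mul_comm]
      rw [Finset.sum_congr rfl (fun l _ => this l)]
      rw [← Finset.sum_apply, ← map_sum L, ht]
      simp
    have hdet : (D.map (ev v)).det ≠ 0 := by
      intro h0
      apply hv
      have : (ev v) D.det = ((D.map (ev v)).det) :=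
        RingHom.map_det ((ev v) : MvPolynomial σk K →+* K) D
      rw [h0] at this
      rw [← MvPolynomial.coe_aeval_eq_eval]
      exact this
    have := Matrix.eq_zero_of_mulVec_eq_zero hdet hDt
    exact this
  -- the commutator vanishes wherever the determinant does not
  set G : Matrix (Fin n) (Fin n) (MvPolynomial σk K) := gEval p XX * gEval p YY - gEval p YY * gEval p XX
    with hG
  have hGmap : ∀ v : σk → K, G.map (ev v)
      = ncEval p (xV v) * ncEval p (yV v) - ncEval p (yV v) * ncEval p (xV v) := by
    intro v
    have hsub : ∀ (P Q : Matrix (Fin n) (Fin n) (MvPolynomial σk K)), (P - Q).map (ev v)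
        = P.map (ev v) - Q.map (ev v) := by
      intro P Q
      ext r c
      simp [Matrix.map_apply, Matrix.sub_apply]
    rw [hG, hsub, hmul', hmul', hmap1, hmap2]
  have hGzero : ∀ r c, G r c = 0 := by
    intro r c
    have := zariski (G r c) D.det ⟨v0, hdet0⟩ ?_
    · exact this
    intro v hv
    have hcomm : Commute (ncEval p (xV v)) (ncEval p (yV v)) := by
      have h1 : Commute (ncEval p (xV v)) (ncEval p (aV v)) := by
        rw [haV]
        exact H1 (xV v) (yV v i)
      have h2 : Commute (ncEval p (yV v)) (ncEval p (aV v)) := by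
        apply HIH
        intro j hj
        rw [haV]
        exact hyV v j hj
      exact centralizer_comm hn (hnd v hv) h1 h2
    have hGv := hGmap v
    have : G.map (ev v) = 0 := by
      rw [hGv, sub_eq_zero]
      exact hcomm.eq
    have hentry := congrFun (congrFun this r) c
    rw [← MvPolynomial.coe_aeval_eq_eval]
    exact hentry
  -- conclude for arbitrary points
  intro x y hxy
  set v1 : σk → K := Sum.elim (fun z => x z.1 z.2.1 z.2.2) (fun z => y z.1 z.2.1 z.2.2) with hv1
  have hxv1 : xV v1 = x := by
    funext j
    ext r c
    simp [xV, hXX, Matrix.map_apply, ev, MvPolynomial.aeval_X, hv1]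
  have hyv1 : yV v1 = y := by
    funext j
    ext r c
    by_cases hj : j ∈ S
    · show ((if j ∈ S then Matrix.of (fun r c => MvPolynomial.X (σ := σk) (Sum.inr (j, r, c)))
        else XX j).map (ev v1)) r c = y j r c
      rw [if_pos hj]
      simp [Matrix.map_apply, ev, hv1]
    · show ((if j ∈ S then Matrix.of (fun r c => MvPolynomial.X (σ := σk) (Sum.inr (j, r, c)))
        else XX j).map (ev v1)) r c = y j r c
      rw [if_neg hj]
      have hxyj := hxy j hj
      simp [hXX, Matrix.map_apply, ev, hv1, congrFun (congrFun hxyj r) c]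
  have hzero : ncEval p x * ncEval p y - ncEval p y * ncEval p x = 0 := by
    ext r c
    have h2 : (G.map (ev v1)) r c = 0 := by
      rw [Matrix.map_apply, hGzero r c, map_zero]
    rw [hGmap v1, hxv1, hyv1] at h2
    rw [Matrix.zero_apply]
    exact h2
  unfold Commute SemiconjBy
  exact sub_eq_zero.mp hzero
end Density

section Final
variable {K : Type*} [Field K] {m n : ℕ}

lemma all_commute [Infinite K] (hn : 1 ≤ n) (p : FreeAlgebra K (Fin m))
    (H1 : ∀ (i : Fin m) (a : Fin m → Matrix (Fin n) (Fin n) K)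
      (c : Matrix (Fin n) (Fin n) K),
      Commute (ncEval p a) (ncEval p (Function.update a i c)))
    (b : Fin m → Matrix (Fin n) (Fin n) K) (hb : Nondero (ncEval p b)) :
    ∀ x y : Fin m → Matrix (Fin n) (Fin n) K, Commute (ncEval p x) (ncEval p y) := by
  classical
  have claim : ∀ (k : ℕ) (S : Finset (Fin m)), S.card ≤ k →
      ∀ x y : Fin m → Matrix (Fin n) (Fin n) K,
        (∀ j ∉ S, x j = y j) → Commute (ncEval p x) (ncEval p y) := by
    intro k
    induction k with
    | zero =>
      intro S hS x y hxy
      have hSe : S = ∅ := Finset.card_eq_zero.mp (le_antisymm hS (Nat.zero_le _))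
      have hxey : x = y := funext fun j => hxy j (by simp [hSe])
      rw [hxey]
    | succ k ih =>
      intro S hS x y hxy
      rcases S.eq_empty_or_nonempty with hSe | ⟨i, hi⟩
      · have hxey : x = y := funext fun j => hxy j (by simp [hSe])
        rw [hxey]
      · refine density_step hn p i S hi (H1 i) ?_ b hb x y hxy
        intro x' y' h
        refine ih (S.erase i) ?_ x' y' h
        have := Finset.card_erase_of_mem hi
        omega
  intro x y
  exact claim m Finset.univ (by simp) x y (fun j hj => absurd (Finset.mem_univ j) hj)

lemma ncEval_conj (p : FreeAlgebra K (Fin m)) (u uinv : Matrix (Fin n) (Fin n) K)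
    (h1 : u * uinv = 1) (h2 : uinv * u = 1) (b : Fin m → Matrix (Fin n) (Fin n) K) :
    ncEval p (fun i => u * b i * uinv) = u * ncEval p b * uinv := by
  let ψ : Matrix (Fin n) (Fin n) K →ₐ[K] Matrix (Fin n) (Fin n) K :=
    { toFun := fun N => u * N * uinv
      map_one' := by show u * 1 * uinv = 1; rw [mul_one, h1]
      map_mul' := by
        intro N N'
        show u * (N * N') * uinv = (u * N * uinv) * (u * N' * uinv)
        simp only [mul_assoc]
        congr 1
        rw [← mul_assoc uinv u, h2, one_mul]
      map_zero' := by simp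
      map_add' := by
        intro N N'
        show u * (N + N') * uinv = u * N * uinv + u * N' * uinv
        rw [mul_add, add_mul]
      commutes' := by
        intro c
        simp only [Algebra.algebraMap_eq_smul_one]
        rw [mul_smul_comm, mul_one, smul_mul_assoc, h1] }
  have h : (ψ.comp (FreeAlgebra.lift K b)) = FreeAlgebra.lift K (fun i => u * b i * uinv) := by
    apply FreeAlgebra.hom_ext
    funext i
    simp [ψ, FreeAlgebra.lift_ι_apply]
  have := AlgHom.congr_fun h p
  simpa [ncEval, ψ] using this.symm

end Final

/-- If a noncommutative polynomial `p` has an evaluation of degree `n` on `M_n(K)`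
(`K` an infinite field, `n ≥ 2`), then there exist an index `i` and matrices
`a_1,…,a_m, a_i'` such that the values of `p` at `(a_1,…,a_i,…,a_m)` and at
`(a_1,…,a_i',…,a_m)` do not commute. -/
theorem noncommuting_values_of_degree_n_evaluation
    {K : Type*} [Field K] [Infinite K] {m n : ℕ} (hn : 2 ≤ n)
    (p : FreeAlgebra K (Fin m))
    (hdeg : ∃ b : Fin m → Matrix (Fin n) (Fin n) K, (minpoly K (ncEval p b)).natDegree = n) :
    ∃ (i : Fin m) (a : Fin m → Matrix (Fin n) (Fin n) K) (a' : Matrix (Fin n) (Fin n) K),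
      ¬ Commute (ncEval p a) (ncEval p (Function.update a i a')) := by
  classical
  by_contra hcon
  push_neg at hcon
  obtain ⟨b, hdegb⟩ := hdeg
  set A := ncEval p b with hA
  have hnd : Nondero A := nondero_of_minpoly_natDegree hn hdegb
  have hall := all_commute (by omega : 1 ≤ n) p (fun i a c => hcon i a c) b hnd
  obtain ⟨v, hv⟩ := exists_cyclic A hdegb
  -- pair independence of v and A v
  set y : Fin n → K := A *ᵥ v with hy
  have hpair : ∀ cc dd : K, cc • v + dd • y = 0 → cc = 0 ∧ dd = 0 := by
    intro cc dd hcd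
    have h0 : (0 : ℕ) < n := by omega
    have h1 : (1 : ℕ) < n := by omega
    set k0 : Fin n := ⟨0, h0⟩ with hk0
    set k1 : Fin n := ⟨1, h1⟩ with hk1
    have hk01 : k0 ≠ k1 := by
      intro h
      have := congrArg Fin.val h
      simp [hk0, hk1] at this
    set t : Fin n → K := (Pi.single k0 cc : Fin n → K) + (Pi.single k1 dd : Fin n → K) with ht
    have hsum : (∑ k : Fin n, t k • (A ^ (k : ℕ) *ᵥ v)) = cc • v + dd • y := by
      rw [ht]
      have : ∀ k : Fin n, ((Pi.single k0 cc : Fin n → K) + (Pi.single k1 dd : Fin n → K)) k • (A ^ (k : ℕ) *ᵥ v)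
          = (Pi.single k0 cc : Fin n → K) k • (A ^ (k : ℕ) *ᵥ v) + (Pi.single k1 dd : Fin n → K) k • (A ^ (k : ℕ) *ᵥ v) := by
        intro k
        rw [Pi.add_apply, add_smul]
      rw [Finset.sum_congr rfl (fun k _ => this k), Finset.sum_add_distrib]
      congr 1
      · rw [Finset.sum_eq_single k0]
        · simp [hk0]
        · intro k _ hk
          rw [Pi.single_eq_of_ne hk, zero_smul]
        · simp
      · rw [Finset.sum_eq_single k1]
        · simp [hk1, hy]
        · intro k _ hk
          rw [Pi.single_eq_of_ne hk, zero_smul]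
        · simp
    have ht0 : t = 0 := hv t (by rw [hsum, hcd])
    have hk10 : k1 ≠ k0 := Ne.symm hk01
    constructor
    · have := congrFun ht0 k0
      simpa [ht, Pi.single_apply, hk01, hk10] using this
    · have := congrFun ht0 k1
      simpa [ht, Pi.single_apply, hk01, hk10] using this
  have hli : LinearIndependent K ![v, y] := LinearIndependent.pair_iff.mpr hpair
  -- a dual functional
  obtain ⟨T, hT⟩ := Submodule.exists_isCompl (Submodule.span K (Set.range ![v, y]))
  set b0 := Module.Basis.span hli with hb0
  set f : (Fin n → K) →ₗ[K] K :=
    (b0.coord 1) ∘ₗ (Submodule.linearProjOfIsCompl _ T hT) with hf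
  have hmem : ∀ i : Fin 2, ![v, y] i ∈ Submodule.span K (Set.range ![v, y]) :=
    fun i => Submodule.subset_span ⟨i, rfl⟩
  have hfapp : ∀ i : Fin 2, f (![v, y] i) = if i = 1 then 1 else 0 := by
    intro i
    have hproj : (Submodule.linearProjOfIsCompl _ T hT) (![v, y] i) = b0 i := by
      have h1 : (Submodule.linearProjOfIsCompl _ T hT) ((⟨![v, y] i, hmem i⟩ :
          Submodule.span K (Set.range ![v, y])) : Fin n → K) = ⟨![v, y] i, hmem i⟩ :=
        Submodule.linearProjOfIsCompl_apply_left hT _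
      have h2 : b0 i = ⟨![v, y] i, hmem i⟩ := by
        apply Subtype.ext
        rw [hb0, Module.Basis.span_apply]
      rw [h2]
      exact h1
    rw [hf, LinearMap.comp_apply, hproj, Module.Basis.coord_apply, Module.Basis.repr_self]
    by_cases hi : i = 1
    · simp [hi]
    · simp [Finsupp.single_apply, hi, Ne.symm hi]
  have hfv : f v = 0 := by
    have := hfapp 0
    simpa using this
  have hfy : f y = 1 := by
    have := hfapp 1
    simpa using this
  -- choose the parameter t
  set γ : K := f (A *ᵥ y) with hγ
  obtain ⟨t, htt⟩ := Infinite.exists_notMem_finset ({0, γ} : Finset K)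
  have ht0 : t ≠ 0 := by intro h; exact htt (by simp [h])
  have htγ : t ≠ γ := by intro h; exact htt (by simp [h])
  -- the rank one perturbation
  set E : Matrix (Fin n) (Fin n) K :=
    Matrix.of (fun r c => v r * (t * f (fun j => if c = j then 1 else 0))) with hE
  have hfz : ∀ z : Fin n → K, f z = ∑ c : Fin n, z c * f (fun j => if c = j then 1 else 0) := by
    intro z
    conv_lhs => rw [pi_eq_sum_univ z]
    rw [map_sum]
    congr 1
    funext c
    rw [LinearMap.map_smul, smul_eq_mul]
  have hEz : ∀ z : Fin n → K, E *ᵥ z = (t * f z) • v := by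
    intro z
    funext r
    show (∑ c : Fin n, E r c * z c) = (t * f z) * v r
    rw [hE]
    simp only [Matrix.of_apply]
    rw [hfz z, Finset.mul_sum]
    rw [Finset.sum_congr rfl (fun c _ => by ring_nf : ∀ c ∈ Finset.univ,
      v r * (t * f fun j => if c = j then 1 else 0) * z c
        = t * (z c * f fun j => if c = j then 1 else 0) * v r)]
    rw [← Finset.sum_mul, ← Finset.mul_sum]
  have hEE : E * E = 0 := by
    have : ∀ z, (E * E) *ᵥ z = (0 : Matrix (Fin n) (Fin n) K) *ᵥ z := by
      intro z
      rw [← Matrix.mulVec_mulVec, hEz z, Matrix.mulVec_smul, hEz v, hfv, mul_zero, zero_smul,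
        smul_zero, Matrix.zero_mulVec]
    ext i j
    have := congrFun (this (Pi.single j 1)) i
    simpa [Matrix.mulVec_single] using this
  set u : Matrix (Fin n) (Fin n) K := 1 + E with hu
  set uinv : Matrix (Fin n) (Fin n) K := 1 - E with huinv
  have huv : u * uinv = 1 := by
    have : u * uinv = 1 - E * E := by rw [hu, huinv]; noncomm_ring
    rw [this, hEE, sub_zero]
  have hvu : uinv * u = 1 := by
    have : uinv * u = 1 - E * E := by rw [hu, huinv]; noncomm_ring
    rw [this, hEE, sub_zero]
  set B : Matrix (Fin n) (Fin n) K := u * A * uinv with hB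
  have hAB : Commute A B := by
    have := hall b (fun i => u * b i * uinv)
    rwa [ncEval_conj p u uinv huv hvu b, ← hA, ← hB] at this
  -- compute the commutator on v
  have hEv : E *ᵥ v = 0 := by rw [hEz, hfv, mul_zero, zero_smul]
  have hEy : E *ᵥ y = t • v := by rw [hEz, hfy, mul_one]
  have huinvv : uinv *ᵥ v = v := by
    rw [huinv, Matrix.sub_mulVec, Matrix.one_mulVec, hEv, sub_zero]
  have hBv : B *ᵥ v = y + t • v := by
    rw [hB, ← Matrix.mulVec_mulVec, ← Matrix.mulVec_mulVec, huinvv, ← hy, hu,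
      Matrix.add_mulVec, Matrix.one_mulVec, hEy]
  have hABv : A *ᵥ (B *ᵥ v) = A *ᵥ y + t • y := by
    rw [hBv, Matrix.mulVec_add, Matrix.mulVec_smul, ← hy]
  have huinvy : uinv *ᵥ y = y - t • v := by
    rw [huinv, Matrix.sub_mulVec, Matrix.one_mulVec, hEy]
  have hBAv : B *ᵥ (A *ᵥ v) = A *ᵥ y - t • y + (t * (γ - t)) • v := by
    rw [← hy, hB, ← Matrix.mulVec_mulVec, ← Matrix.mulVec_mulVec, huinvy]
    rw [Matrix.mulVec_sub, Matrix.mulVec_smul]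
    rw [hu, Matrix.add_mulVec, Matrix.one_mulVec]
    rw [hEz]
    have : f (A *ᵥ y - t • y) = γ - t := by
      rw [map_sub, LinearMap.map_smul, hfy, smul_eq_mul, mul_one, ← hγ]
    rw [this]
  have hcomm := hAB.eq
  have hvec : A *ᵥ (B *ᵥ v) = B *ᵥ (A *ᵥ v) := by
    rw [Matrix.mulVec_mulVec, Matrix.mulVec_mulVec, hcomm]
  rw [hABv, hBAv] at hvec
  have hrel : (t * (t - γ)) • v + (2 * t) • y = 0 := by
    have h8 := hvec
    linear_combination (norm := module) h8
  have := (hpair _ _ hrel).1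
  have hne : t * (t - γ) ≠ 0 := mul_ne_zero ht0 (sub_ne_zero.mpr htγ)
  exact hne this
end

section
/- Let F be a field with char F ≠ 2 and let D be a finite-dimensional division algebra over F whose center is exactly F·1. Suppose V is a 2-dimensional F-linear subspace of D such that every nonzero v ∈ V is 2-central, i.e., v² ∈ F·1 but v ∉ F·1. Then D contains an F-central quaternion subalgebra: there exist u, w ∈ D with u² ∈ F·1, w² ∈ F·1, u ∉ F·1, w ∉ F·1, u·w ≠ 0, and u·w = −w·u, so that the F-subalgebra of D generated by u and w is 4-dimensional over F with center exactly F·1. -/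
open Module

section quat
variable {F D : Type*} [Field F] [DivisionRing D] [Algebra F D]
variable {u w : D} {a b : F}

lemma CQaux_pair (hu0 : u ∉ (⊥ : Subalgebra F D)) {α β : F}
    (h : α • (1:D) + β • u = 0) : α = 0 ∧ β = 0 := by
  by_cases hβ : β = 0
  · subst hβ
    simp only [zero_smul, add_zero, smul_eq_zero, one_ne_zero, or_false] at h
    exact ⟨h, rfl⟩
  · exfalso
    apply hu0
    rw [Algebra.mem_bot]
    refine ⟨-α/β, ?_⟩
    rw [Algebra.algebraMap_eq_smul_one]
    have h1 : β • u = (-α) • (1:D) := by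
      rw [neg_smul, eq_neg_iff_add_eq_zero, add_comm]; exact h
    have h2 := congrArg (fun x => β⁻¹ • x) h1
    simp only [smul_smul, inv_mul_cancel₀ hβ, one_smul] at h2
    rw [h2, div_eq_inv_mul]

section rel
variable (hu : u * u = a • (1:D)) (hw : w * w = b • (1:D)) (hanti : w * u = -(u * w))

include hu in
lemma CQe1 : u * (u * w) = a • w := by
  rw [← mul_assoc, hu, smul_mul_assoc, one_mul]

include hu hanti in
lemma CQe2 : (u * w) * u = -(a • w) := by
  rw [mul_assoc, hanti, mul_neg, CQe1 hu]

include hw hanti in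
lemma CQe3 : w * (u * w) = -(b • u) := by
  rw [← mul_assoc, hanti, neg_mul, mul_assoc, hw, mul_smul_comm, mul_one]

include hw in
lemma CQe4 : (u * w) * w = b • u := by
  rw [mul_assoc, hw, mul_smul_comm, mul_one]

include hu hw hanti in
lemma CQe5 : (u * w) * (u * w) = -((a * b) • (1:D)) := by
  rw [mul_assoc, CQe3 hw hanti, mul_neg, mul_smul_comm, hu, smul_smul, mul_comm b a]

set_option linter.unusedSectionVars false in
include hu hw hanti in
lemma CQcoeff_zero (h2 : (2:F) ≠ 0) (ha : a ≠ 0)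
    (hu0 : u ∉ (⊥ : Subalgebra F D)) (hwne : w ≠ 0)
    {α β γ δ : F} (h : α • (1:D) + β • u + γ • w + δ • (u * w) = 0) :
    α = 0 ∧ β = 0 ∧ γ = 0 ∧ δ = 0 := by
  have key : (2*(β*a)) • (1:D) + (2*α) • u = 0 := by
    have hc : u * (α • (1:D) + β • u + γ • w + δ • (u * w))
        + (α • (1:D) + β • u + γ • w + δ • (u * w)) * u = 0 := by rw [h]; simp
    simp only [mul_add, add_mul, mul_smul_comm, smul_mul_assoc, mul_one, one_mul,
      hu, hw, hanti, CQe1 hu, CQe2 hu hanti, CQe3 hw hanti, CQe4 hw, CQe5 hu hw hanti,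
      smul_smul, smul_neg] at hc
    rw [← hc]
    module
  obtain ⟨hβa, hα2⟩ := CQaux_pair hu0 key
  have hα : α = 0 := by
    rcases mul_eq_zero.1 hα2 with h'|h'
    · exact absurd h' h2
    · exact h'
  have hβ : β = 0 := by
    rcases mul_eq_zero.1 hβa with h'|h'
    · exact absurd h' h2
    · rcases mul_eq_zero.1 h' with h''|h''
      · exact h''
      · exact absurd h'' ha
  subst hα hβ
  simp only [zero_smul, zero_add, add_zero] at h
  have hfac : (γ • (1:D) + δ • u) * w = 0 := by
    rw [add_mul, smul_mul_assoc, one_mul, smul_mul_assoc, ← h]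
  rcases mul_eq_zero.1 hfac with h'|h'
  · obtain ⟨hγ, hδ⟩ := CQaux_pair hu0 h'
    exact ⟨rfl, rfl, hγ, hδ⟩
  · exact absurd h' hwne

set_option linter.unusedSectionVars false in
include hu hw hanti in
lemma CQmain (h2 : (2:F) ≠ 0) (ha : a ≠ 0) (hb : b ≠ 0)
    (hu0 : u ∉ (⊥ : Subalgebra F D)) (hw0 : w ∉ (⊥ : Subalgebra F D)) :
    Module.finrank F (Algebra.adjoin F {u, w} : Subalgebra F D) = 4 ∧
    Subalgebra.center F (Algebra.adjoin F {u, w} : Subalgebra F D) = ⊥ := by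
  have une : u ≠ 0 := by rintro rfl; exact hu0 (Subalgebra.zero_mem ⊥)
  have wne : w ≠ 0 := by rintro rfl; exact hw0 (Subalgebra.zero_mem ⊥)
  set f : Fin 4 → D := ![1, u, w, u * w] with hf
  set S : Submodule F D := Submodule.span F (Set.range f) with hS
  have m0 : (1:D) ∈ S := Submodule.subset_span ⟨0, rfl⟩
  have m1 : u ∈ S := Submodule.subset_span ⟨1, rfl⟩
  have m2 : w ∈ S := Submodule.subset_span ⟨2, rfl⟩
  have m3 : u * w ∈ S := Submodule.subset_span ⟨3, rfl⟩
  have hprod : ∀ i j : Fin 4, f i * f j ∈ S := by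
    intro i j
    fin_cases i <;> fin_cases j <;>
      (simp only [hf]; simp only [Nat.succ_eq_add_one, Nat.reduceAdd, Fin.reduceFinMk, Fin.mk_one, Fin.mk_zero,
        Fin.isValue, Matrix.cons_val_zero, Matrix.cons_val_one, Matrix.cons_val_two,
        Matrix.cons_val_three, Matrix.tail_cons, Matrix.head_cons, one_mul, mul_one];
       first
        | exact m0 | exact m1 | exact m2 | exact m3
        | (rw [hu]; exact S.smul_mem _ m0)
        | (rw [hw]; exact S.smul_mem _ m0)
        | (rw [hanti]; exact S.neg_mem m3)
        | (rw [CQe1 hu]; exact S.smul_mem _ m2)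
        | (rw [CQe2 hu hanti]; exact S.neg_mem (S.smul_mem _ m2))
        | (rw [CQe3 hw hanti]; exact S.neg_mem (S.smul_mem _ m1))
        | (rw [CQe4 hw]; exact S.smul_mem _ m1)
        | (rw [CQe5 hu hw hanti]; exact S.neg_mem (S.smul_mem _ m0)))
  have hmul : ∀ x y : D, x ∈ S → y ∈ S → x * y ∈ S := by
    have hSS : S * S ≤ S := by
      rw [hS, Submodule.span_mul_span]
      apply Submodule.span_le.2
      rintro z hz
      rw [Set.mem_mul] at hz
      obtain ⟨x, ⟨i, rfl⟩, y, ⟨j, rfl⟩, rfl⟩ := hz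
      exact hprod i j
    intro x y hx hy
    exact hSS (Submodule.mul_mem_mul hx hy)
  have li : LinearIndependent F f := by
    rw [Fintype.linearIndependent_iff]
    intro g hg
    rw [Fin.sum_univ_four] at hg
    have hg' : g 0 • (1:D) + g 1 • u + g 2 • w + g 3 • (u * w) = 0 := hg
    obtain ⟨h0', h1', h2', h3'⟩ := CQcoeff_zero hu hw hanti h2 ha hu0 wne hg'
    intro i; fin_cases i <;> assumption
  let T : Subalgebra F D := Submodule.toSubalgebra S m0 hmul
  have le1 : Algebra.adjoin F {u, w} ≤ T := by
    apply Algebra.adjoin_le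
    rintro x hx
    rcases Set.mem_insert_iff.1 hx with rfl | hx
    · exact m1
    · rw [Set.mem_singleton_iff.1 hx]; exact m2
  have le2 : S ≤ Subalgebra.toSubmodule (Algebra.adjoin F {u, w}) := by
    apply Submodule.span_le.2
    rintro x ⟨i, rfl⟩
    fin_cases i
    · exact Subalgebra.one_mem _
    · exact Algebra.subset_adjoin (Set.mem_insert u {w})
    · exact Algebra.subset_adjoin (Set.mem_insert_of_mem u rfl)
    · exact Subalgebra.mul_mem _ (Algebra.subset_adjoin (Set.mem_insert u {w}))
        (Algebra.subset_adjoin (Set.mem_insert_of_mem u rfl))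
  have hST : Subalgebra.toSubmodule (Algebra.adjoin F {u, w}) = S :=
    le_antisymm (fun x hx => le1 hx) le2
  constructor
  · have h1 : Module.finrank F (Algebra.adjoin F {u, w} : Subalgebra F D)
        = Module.finrank F (Subalgebra.toSubmodule (Algebra.adjoin F {u, w})) :=
      (Subalgebra.finrank_toSubmodule _).symm
    rw [h1, hST, hS, finrank_span_eq_card li, Fintype.card_fin]
  · apply le_antisymm _ bot_le
    intro x hx
    have hxS : (x : D) ∈ S := by rw [← hST]; exact x.2
    obtain ⟨c, hc⟩ := (Submodule.mem_span_range_iff_exists_fun F).1 hxS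
    rw [Fin.sum_univ_four] at hc
    have hc' : c 0 • (1:D) + c 1 • u + c 2 • w + c 3 • (u * w) = (x : D) := hc
    have humem : u ∈ Algebra.adjoin F {u, w} := Algebra.subset_adjoin (Set.mem_insert u {w})
    have hwmem : w ∈ Algebra.adjoin F {u, w} :=
      Algebra.subset_adjoin (Set.mem_insert_of_mem u rfl)
    have hcu : u * (x : D) = (x : D) * u := by
      have := Subalgebra.mem_center_iff.1 hx ⟨u, humem⟩
      exact congrArg Subtype.val this
    have hcw : w * (x : D) = (x : D) * w := by
      have := Subalgebra.mem_center_iff.1 hx ⟨w, hwmem⟩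
      exact congrArg Subtype.val this
    have E1 : (0:F) • (1:D) + (0:F) • u + (2*(a * c 3)) • w + (2 * c 2) • (u * w) = 0 := by
      have expand : u * (c 0 • (1:D) + c 1 • u + c 2 • w + c 3 • (u * w))
          - (c 0 • (1:D) + c 1 • u + c 2 • w + c 3 • (u * w)) * u
          = (0:F) • (1:D) + (0:F) • u + (2*(a * c 3)) • w + (2 * c 2) • (u * w) := by
        simp only [mul_add, add_mul, mul_smul_comm, smul_mul_assoc, mul_one, one_mul,
          hu, hw, hanti, CQe1 hu, CQe2 hu hanti, CQe3 hw hanti, CQe4 hw,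
          CQe5 hu hw hanti, smul_smul, smul_neg]
        module
      rw [← expand, hc', hcu, sub_self]
    obtain ⟨-, -, h3, h4⟩ := CQcoeff_zero hu hw hanti h2 ha hu0 wne E1
    have hc3 : c 3 = 0 := by
      rcases mul_eq_zero.1 h3 with h'|h'
      · exact absurd h' h2
      · rcases mul_eq_zero.1 h' with h''|h''
        · exact absurd h'' ha
        · exact h''
    have hc2 : c 2 = 0 := by
      rcases mul_eq_zero.1 h4 with h'|h'
      · exact absurd h' h2
      · exact h'
    have E2 : (0:F) • (1:D) + (2*(b * c 3)) • u + (0:F) • w + (2 * c 1) • (u * w) = 0 := by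
      have expand : (c 0 • (1:D) + c 1 • u + c 2 • w + c 3 • (u * w)) * w
          - w * (c 0 • (1:D) + c 1 • u + c 2 • w + c 3 • (u * w))
          = (0:F) • (1:D) + (2*(b * c 3)) • u + (0:F) • w + (2 * c 1) • (u * w) := by
        simp only [mul_add, add_mul, mul_smul_comm, smul_mul_assoc, mul_one, one_mul,
          hu, hw, hanti, CQe1 hu, CQe2 hu hanti, CQe3 hw hanti, CQe4 hw,
          CQe5 hu hw hanti, smul_smul, smul_neg]
        module
      rw [← expand, hc', hcw, sub_self]
    obtain ⟨-, h1', -, h4'⟩ := CQcoeff_zero hu hw hanti h2 ha hu0 wne E2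
    have hc1 : c 1 = 0 := by
      rcases mul_eq_zero.1 h4' with h'|h'
      · exact absurd h' h2
      · exact h'
    have hxval : (x : D) = c 0 • (1:D) := by
      rw [← hc', hc1, hc2, hc3]; simp
    rw [Algebra.mem_bot]
    refine ⟨c 0, Subtype.ext ?_⟩
    rw [hxval]
    simp [Algebra.algebraMap_eq_smul_one]
end rel
end quat


/-- If `D` is a finite-dimensional central division algebra over a field `F` of
characteristic `≠ 2`, and `V ⊆ D` is a 2-dimensional `F`-subspace all of whose nonzero
elements are 2-central (`v² ∈ F·1` but `v ∉ F·1`), then `D` contains an `F`-central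
quaternion subalgebra: anticommuting square-central elements `u, w ∉ F·1` with
`uw ≠ 0`, generating a 4-dimensional `F`-subalgebra whose center is exactly `F·1`. -/
theorem central_quaternion_subalgebra_of_two_central_subspace
    {F D : Type*} [Field F] [DivisionRing D] [Algebra F D] [FiniteDimensional F D]
    (hchar : ringChar F ≠ 2)
    (hcenter : Subalgebra.center F D = ⊥)
    (V : Submodule F D) (hV : Module.finrank F V = 2)
    (h2c : ∀ v ∈ V, v ≠ 0 →
      v ^ 2 ∈ (⊥ : Subalgebra F D) ∧ v ∉ (⊥ : Subalgebra F D)) :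
    ∃ u w : D,
      u ^ 2 ∈ (⊥ : Subalgebra F D) ∧ w ^ 2 ∈ (⊥ : Subalgebra F D) ∧
      u ∉ (⊥ : Subalgebra F D) ∧ w ∉ (⊥ : Subalgebra F D) ∧
      u * w ≠ 0 ∧ u * w = -(w * u) ∧
      Module.finrank F (Algebra.adjoin F {u, w} : Subalgebra F D) = 4 ∧
      Subalgebra.center F (Algebra.adjoin F {u, w} : Subalgebra F D) = ⊥ := by
  classical
  -- characteristic: 2 ≠ 0 in F
  have h2 : (2:F) ≠ 0 := by
    intro h20
    apply hchar
    have hdvd : (ringChar F) ∣ 2 :=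
      (CharP.cast_eq_zero_iff F (ringChar F) 2).1 (by exact_mod_cast h20)
    rcases (Nat.dvd_prime Nat.prime_two).1 hdvd with h | h
    · exact absurd h CharP.ringChar_ne_one
    · exact h
  -- pick a basis of V
  let bV := Module.finBasisOfFinrankEq F V hV
  set u : D := ((bV 0 : V) : D) with hudef
  set v : D := ((bV 1 : V) : D) with hvdef
  have memu : u ∈ V := (bV 0).2
  have memv : v ∈ V := (bV 1).2
  have liUV : LinearIndependent F (fun i => ((bV i : V) : D)) :=
    bV.linearIndependent.map' V.subtype V.ker_subtype
  have hcomb : ∀ s t : F, s • u + t • v = 0 → s = 0 ∧ t = 0 := by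
    intro s t hst
    have := Fintype.linearIndependent_iff.1 liUV ![s, t]
      (by rw [Fin.sum_univ_two]; exact hst)
    exact ⟨this 0, this 1⟩
  have une : u ≠ 0 := by
    intro h
    have := (hcomb 1 0 (by rw [h, one_smul, zero_smul, add_zero])).1
    exact one_ne_zero this
  have vne : v ≠ 0 := by
    intro h
    have := (hcomb 0 1 (by rw [h, one_smul, zero_smul, zero_add])).2
    exact one_ne_zero this
  have huvne : u + v ≠ 0 := by
    intro h
    have := (hcomb 1 1 (by rw [one_smul, one_smul]; exact h)).1
    exact one_ne_zero this
  -- squares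
  obtain ⟨hu2mem, hu0⟩ := h2c u memu une
  obtain ⟨hv2mem, hv0⟩ := h2c v memv vne
  obtain ⟨huv2mem, -⟩ := h2c (u + v) (V.add_mem memu memv) huvne
  obtain ⟨a, ha'⟩ := Algebra.mem_bot.1 hu2mem
  obtain ⟨a', hv'⟩ := Algebra.mem_bot.1 hv2mem
  obtain ⟨s, hs'⟩ := Algebra.mem_bot.1 huv2mem
  have hu : u * u = a • (1:D) := by
    rw [← Algebra.algebraMap_eq_smul_one, ha', pow_two]
  have hv : v * v = a' • (1:D) := by
    rw [← Algebra.algebraMap_eq_smul_one, hv', pow_two]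
  have huv : (u + v) * (u + v) = s • (1:D) := by
    rw [← Algebra.algebraMap_eq_smul_one, hs', pow_two]
  have ha : a ≠ 0 := by
    intro h
    apply une
    have : u * u = 0 := by rw [hu, h, zero_smul]
    exact (mul_self_eq_zero).1 this
  -- the mixed trace
  have hmix : u * v + v * u = s • (1:D) - a • (1:D) - a' • (1:D) := by
    have hexp : u * u + (u * v + (v * u + v * v)) = s • (1:D) := by
      rw [← huv]; noncomm_ring
    rw [← hexp, hu, hv]; abel
  set c : F := s - a - a' with hcdef
  have hmix' : u * v + v * u = c • (1:D) := by
    rw [hmix, hcdef, sub_smul, sub_smul]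
  set t : F := c / (2 * a) with htdef
  set w : D := v - t • u with hwdef
  have memw : w ∈ V := V.sub_mem memv (V.smul_mem t memu)
  have wne : w ≠ 0 := by
    intro h
    have h' : (-t) • u + (1:F) • v = 0 := by
      rw [one_smul, neg_smul, add_comm, ← sub_eq_add_neg, ← hwdef]; exact h
    exact one_ne_zero (hcomb (-t) 1 h').2
  obtain ⟨hw2mem, hw0⟩ := h2c w memw wne
  obtain ⟨b, hb'⟩ := Algebra.mem_bot.1 hw2mem
  have hw : w * w = b • (1:D) := by
    rw [← Algebra.algebraMap_eq_smul_one, hb', pow_two]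
  have hb : b ≠ 0 := by
    intro h
    apply wne
    have : w * w = 0 := by rw [hw, h, zero_smul]
    exact (mul_self_eq_zero).1 this
  -- anticommutation
  have hsum : u * w + w * u = 0 := by
    have e : u * w + w * u = (u * v + v * u) - (2 * t) • (u * u) := by
      rw [hwdef]
      simp only [mul_sub, sub_mul, mul_smul_comm, smul_mul_assoc]
      module
    rw [e, hu, hmix', smul_smul]
    have hct : 2 * t * a = c := by
      rw [htdef]
      field_simp
    rw [hct, sub_self]
  have hanti : w * u = -(u * w) := by
    rw [eq_neg_iff_add_eq_zero, add_comm]; exact hsum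
  have huwne : u * w ≠ 0 := mul_ne_zero une wne
  obtain ⟨hrank, hcent⟩ := CQmain hu hw hanti h2 ha hb hu0 hw0
  exact ⟨u, w, hu2mem, hw2mem, hu0, hw0, huwne,
    by rw [hanti, neg_neg], hrank, hcent⟩
end

section
/- Let F be a field with char F ≠ 2 and let D be a division algebra over F whose center is exactly F·1 and with dim_F D = n². If D contains a 2-dimensional F-linear subspace V such that every nonzero v ∈ V satisfies v² ∈ F·1 and v ∉ F·1, then n is even. -/
open Module

/-- Key lemma: if a finite-dimensional `F`-algebra that is a division ring
contains `u ≠ 0` with `u * u = algebraMap F D a` and `w ≠ 0` anticommuting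
with `u`, and `2 ≠ 0` in `F`, then the dimension of `D` is even. -/
lemma two_dvd_finrank_of_anticommuting
    {F D : Type*} [Field F] [DivisionRing D] [Algebra F D]
    [FiniteDimensional F D]
    (h2F : (2 : F) ≠ 0)
    {u w : D} {a : F} (hu0 : u ≠ 0) (hw0 : w ≠ 0)
    (hu2 : u * u = algebraMap F D a)
    (hanti : u * w = -(w * u)) :
    2 ∣ Module.finrank F D := by
  have ha : a ≠ 0 := by
    intro h
    apply hu0
    have : u * u = 0 := by rw [hu2, h, map_zero]
    exact (mul_self_eq_zero).mp this
  set T₁ : D →ₗ[F] D := LinearMap.mulLeft F u - LinearMap.mulRight F u with hT₁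
  set T₂ : D →ₗ[F] D := LinearMap.mulLeft F u + LinearMap.mulRight F u with hT₂
  set C₁ := LinearMap.ker T₁ with hC₁
  set C₂ := LinearMap.ker T₂ with hC₂
  have memC₁ : ∀ x : D, x ∈ C₁ ↔ u * x = x * u := by
    intro x
    simp [hC₁, hT₁, LinearMap.mem_ker, sub_eq_zero]
  have memC₂ : ∀ x : D, x ∈ C₂ ↔ u * x = -(x * u) := by
    intro x
    simp [hC₂, hT₂, LinearMap.mem_ker, add_eq_zero_iff_eq_neg]
  -- the two kernels intersect trivially
  have hinf : C₁ ⊓ C₂ = ⊥ := by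
    apply le_bot_iff.mp
    intro x hx
    obtain ⟨hx1, hx2⟩ := hx
    rw [Submodule.mem_bot]
    have h1 := (memC₁ x).mp hx1
    have h2 := (memC₂ x).mp hx2
    have : u * x + u * x = 0 := by
      nth_rewrite 1 [h2]
      nth_rewrite 1 [h1]
      exact neg_add_cancel _
    have hux : (2 : F) • (u * x) = 0 := by
      rw [two_smul]; exact this
    have : u * x = 0 := by
      rcases smul_eq_zero.mp hux with h | h
      · exact absurd h h2F
      · exact h
    rcases mul_eq_zero.mp this with h | h
    · exact absurd h hu0
    · exact h
  -- they span everything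
  have hsup : C₁ ⊔ C₂ = ⊤ := by
    rw [eq_top_iff]
    intro x _
    have hy₁ : a • x + u * (x * u) ∈ C₁ := by
      rw [memC₁]
      have e1 : u * (a • x + u * (x * u)) = a • (u * x) + a • (x * u) := by
        rw [mul_add, mul_smul_comm, ← mul_assoc, hu2, ← Algebra.smul_def]
      have e2 : (a • x + u * (x * u)) * u = a • (x * u) + a • (u * x) := by
        rw [add_mul, smul_mul_assoc, mul_assoc, mul_assoc, hu2,
          ← Algebra.commutes, ← mul_assoc, ← Algebra.commutes, mul_assoc,
          ← Algebra.smul_def]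
      rw [e1, e2, add_comm]
    have hy₂ : a • x - u * (x * u) ∈ C₂ := by
      rw [memC₂]
      have e1 : u * (a • x - u * (x * u)) = a • (u * x) - a • (x * u) := by
        rw [mul_sub, mul_smul_comm, ← mul_assoc, hu2, ← Algebra.smul_def]
      have e2 : (a • x - u * (x * u)) * u = a • (x * u) - a • (u * x) := by
        rw [sub_mul, smul_mul_assoc, mul_assoc, mul_assoc, hu2,
          ← Algebra.commutes, ← mul_assoc, ← Algebra.commutes, mul_assoc,
          ← Algebra.smul_def]
      rw [e1, e2, neg_sub]
    have hx : x = ((2 * a)⁻¹ : F) • ((a • x + u * (x * u)) + (a • x - u * (x * u))) := by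
      have h2a : (2 * a : F) ≠ 0 := mul_ne_zero h2F ha
      rw [show (a • x + u * (x * u)) + (a • x - u * (x * u)) = (2 * a : F) • x by
        rw [mul_smul, two_smul]; abel]
      rw [smul_smul, inv_mul_cancel₀ h2a, one_smul]
    rw [hx]
    exact Submodule.smul_mem _ _ (Submodule.add_mem _
      (Submodule.mem_sup_left hy₁) (Submodule.mem_sup_right hy₂))
  -- multiplication by w gives injections between C₁ and C₂ in both directions
  have hmap₁ : ∀ x ∈ C₁, w * x ∈ C₂ := by
    intro x hx
    rw [memC₁] at hx
    rw [memC₂]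
    rw [← mul_assoc, hanti, neg_mul, mul_assoc, hx, ← mul_assoc]
  have hmap₂ : ∀ x ∈ C₂, w * x ∈ C₁ := by
    intro x hx
    rw [memC₂] at hx
    rw [memC₁]
    rw [← mul_assoc, hanti, neg_mul, mul_assoc, hx, mul_neg, neg_neg, ← mul_assoc]
  have hrank : finrank F C₁ = finrank F C₂ := by
    let f₁ : C₁ →ₗ[F] C₂ :=
      LinearMap.codRestrict C₂ ((LinearMap.mulLeft F w).comp C₁.subtype)
        (fun x => hmap₁ x x.2)
    let f₂ : C₂ →ₗ[F] C₁ :=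
      LinearMap.codRestrict C₁ ((LinearMap.mulLeft F w).comp C₂.subtype)
        (fun x => hmap₂ x x.2)
    have hinj : ∀ (M N : Submodule F D) (f : M →ₗ[F] N),
        (∀ x : M, (f x : D) = w * x) → Function.Injective f := by
      intro M N f hf x y hxy
      apply Subtype.ext
      have := congrArg (Subtype.val) hxy
      rw [hf, hf] at this
      exact mul_left_cancel₀ hw0 this
    apply le_antisymm
    · exact LinearMap.finrank_le_finrank_of_injective
        (hinj _ _ f₁ (fun x => rfl))
    · exact LinearMap.finrank_le_finrank_of_injective
        (hinj _ _ f₂ (fun x => rfl))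
  have := Submodule.finrank_sup_add_finrank_inf_eq C₁ C₂
  rw [hsup, hinf, finrank_top, finrank_bot, add_zero, hrank] at this
  exact ⟨finrank F C₂, by omega⟩



/-- If `D` is a central division algebra of dimension `n²` over a field `F` of
characteristic `≠ 2`, and `D` contains a 2-dimensional `F`-subspace all of whose
nonzero elements `v` satisfy `v² ∈ F·1` and `v ∉ F·1`, then `n` is even. -/
theorem even_of_two_central_subspace
    {F D : Type*} [Field F] [DivisionRing D] [Algebra F D]
    (hchar : ringChar F ≠ 2)
    (hcenter : Subalgebra.center F D = ⊥)
    {n : ℕ} (hdim : Module.finrank F D = n ^ 2)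
    (V : Submodule F D) (hV : Module.finrank F V = 2)
    (h2c : ∀ v ∈ V, v ≠ 0 →
      v ^ 2 ∈ (⊥ : Subalgebra F D) ∧ v ∉ (⊥ : Subalgebra F D)) :
    Even n := by
  rcases Nat.eq_zero_or_pos n with h0 | hn
  · exact h0 ▸ Even.zero
  have hD : FiniteDimensional F D :=
    FiniteDimensional.of_finrank_pos (by rw [hdim]; positivity)
  have h2F : (2 : F) ≠ 0 := Ring.two_ne_zero hchar
  -- pick a basis of V
  let b := Module.finBasisOfFinrankEq F V hV
  set u : D := (b 0 : D) with hudef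
  set w₀ : D := (b 1 : D) with hw₀def
  have hindep : ∀ s t : F, s • u + t • w₀ = 0 → s = 0 ∧ t = 0 := by
    have hli : LinearIndependent F (fun i => ((b i : V) : D)) :=
      b.linearIndependent.map' V.subtype (Submodule.ker_subtype V)
    intro s t hst
    have h := Fintype.linearIndependent_iff.mp hli ![s, t] ?_
    · exact ⟨h 0, h 1⟩
    · rw [Fin.sum_univ_two]
      simpa using hst
  have huV : u ∈ V := (b 0).2
  have hwV : w₀ ∈ V := (b 1).2
  have hu0 : u ≠ 0 := by
    intro h
    exact one_ne_zero (hindep 1 0 (by simp [h])).1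
  have hw00 : w₀ ≠ 0 := by
    intro h
    exact one_ne_zero (hindep 0 1 (by simp [h])).2
  have huw0 : u + w₀ ≠ 0 := by
    intro h
    exact one_ne_zero (hindep 1 1 (by simpa using h)).1
  obtain ⟨ha2, -⟩ := h2c u huV hu0
  obtain ⟨hb2, -⟩ := h2c w₀ hwV hw00
  obtain ⟨hc2, -⟩ := h2c (u + w₀) (V.add_mem huV hwV) huw0
  rw [Algebra.mem_bot] at ha2 hb2 hc2
  obtain ⟨a, ha⟩ := ha2
  obtain ⟨e, he⟩ := hb2
  obtain ⟨c, hc⟩ := hc2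
  have hu2 : u * u = algebraMap F D a := by rw [← pow_two]; exact ha.symm
  have hw2 : w₀ * w₀ = algebraMap F D e := by rw [← pow_two]; exact he.symm
  have ha0 : a ≠ 0 := by
    intro h
    rw [h, map_zero] at ha
    exact pow_ne_zero 2 hu0 ha.symm
  -- the anticommutator of u and w₀ is a scalar
  have hexp : (u + w₀) ^ 2 = u * u + (u * w₀ + w₀ * u) + w₀ * w₀ := by
    noncomm_ring
  have hs : u * w₀ + w₀ * u = algebraMap F D (c - a - e) := by
    have h := hc
    rw [hexp, hu2, hw2] at h
    rw [map_sub, map_sub, h]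
    abel
  -- replace w₀ by an element anticommuting with u
  set t : F := (c - a - e) / (2 * a) with htdef
  set w : D := w₀ - algebraMap F D t * u with hwdef
  have e1 : u * (algebraMap F D t * u) = algebraMap F D (t * a) := by
    rw [Algebra.commutes t u, ← mul_assoc, hu2, ← map_mul, mul_comm t a]
  have e2 : algebraMap F D t * u * u = algebraMap F D (t * a) := by
    rw [mul_assoc, hu2, ← map_mul]
  have hsum : u * w + w * u = 0 := by
    have key : u * w + w * u = algebraMap F D ((c - a - e) - t * (2 * a)) := by
      rw [hwdef, mul_sub, sub_mul, e1, e2, map_sub, ← hs,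
        show algebraMap F D (t * (2 * a)) =
          algebraMap F D (t * a) + algebraMap F D (t * a) by
            rw [← map_add]; ring_nf]
      abel
    rw [key, show (c - a - e) - t * (2 * a) = 0 by
      rw [htdef]; field_simp; ring, map_zero]
  have hanti : u * w = -(w * u) := eq_neg_of_add_eq_zero_left hsum
  have hw0 : w ≠ 0 := by
    intro h
    rw [hwdef, sub_eq_zero] at h
    refine one_ne_zero (hindep (-t) 1 ?_).2
    rw [one_smul, neg_smul, Algebra.smul_def, ← h, neg_add_cancel]
  have hdvd : 2 ∣ Module.finrank F D :=
    two_dvd_finrank_of_anticommuting h2F hu0 hw0 hu2 hanti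
  rw [hdim] at hdvd
  have : 2 ∣ n := Nat.Prime.dvd_of_dvd_pow Nat.prime_two hdvd
  exact (even_iff_two_dvd).mpr this
end

section
/- Let D be a division ring with center F, let a, b, c, d ∈ D with b ≠ 0, and let α ∈ F. Then the 2×2 matrix A = [[a, b], [c, d]] over D satisfies A² = α·I if and only if c = −b⁻¹(a² − α) and d = −b⁻¹ a b. In particular, the square-central 2×2 matrices over D with nonzero upper-right entry are exactly the matrices [[a, b], [−b⁻¹(a² − α), −b⁻¹ a b]] with α ∈ F and a, b ∈ D, b ≠ 0. -/
private lemma sq_entries {D : Type*} [DivisionRing D] (a b c d α : D) :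
    (!![a, b; c, d] : Matrix (Fin 2) (Fin 2) D) ^ 2 = Matrix.scalar (Fin 2) α ↔
      (a*a + b*c = α ∧ a*b + b*d = 0 ∧ c*a + d*c = 0 ∧ c*b + d*d = α) := by
  rw [pow_two, Matrix.mul_fin_two]
  constructor
  · intro h
    have h0 := congrFun (congrFun h 0) 0
    have h1 := congrFun (congrFun h 0) 1
    have h2 := congrFun (congrFun h 1) 0
    have h3 := congrFun (congrFun h 1) 1
    simp [Matrix.scalar, Matrix.diagonal] at h0 h1 h2 h3
    exact ⟨h0, h1, h2, h3⟩
  · rintro ⟨h0, h1, h2, h3⟩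
    ext i j
    fin_cases i <;> fin_cases j <;> simp [Matrix.scalar, Matrix.diagonal, h0, h1, h2, h3]

private lemma key_iff {D : Type*} [DivisionRing D] (a b c d : D) (hb : b ≠ 0)
    (α : D) (hα : α ∈ Subring.center D) :
    ((!![a, b; c, d] : Matrix (Fin 2) (Fin 2) D) ^ 2 = Matrix.scalar (Fin 2) α ↔
      c = -(b⁻¹ * (a ^ 2 - α)) ∧ d = -(b⁻¹ * a * b)) := by
  rw [sq_entries]
  rw [Subring.mem_center_iff] at hα
  constructor
  · rintro ⟨h0, h1, h2, h3⟩
    constructor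
    · have hbc : b * c = α - a * a := eq_sub_of_add_eq' h0
      have : c = b⁻¹ * (α - a * a) := by
        rw [← hbc, inv_mul_cancel_left₀ hb]
      rw [this]; noncomm_ring
    · have hbd : b * d = -(a * b) := by
        have := eq_sub_of_add_eq' h1
        rw [this]; noncomm_ring
      have : d = b⁻¹ * -(a * b) := by
        rw [← hbd, inv_mul_cancel_left₀ hb]
      rw [this]; noncomm_ring
  · rintro ⟨hc, hd⟩
    subst hc hd
    have hbinv : b * b⁻¹ = 1 := mul_inv_cancel₀ hb
    refine ⟨?_, ?_, ?_, ?_⟩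
    · calc a * a + b * -(b⁻¹ * (a ^ 2 - α))
          = a * a - (b * b⁻¹) * (a ^ 2 - α) := by noncomm_ring
        _ = α := by rw [hbinv]; noncomm_ring
    · calc a * b + b * -(b⁻¹ * a * b) = a * b - (b * b⁻¹) * a * b := by noncomm_ring
        _ = 0 := by rw [hbinv]; noncomm_ring
    · calc -(b⁻¹ * (a ^ 2 - α)) * a + -(b⁻¹ * a * b) * -(b⁻¹ * (a ^ 2 - α))
          = -(b⁻¹ * (a ^ 2 - α)) * a + b⁻¹ * a * ((b * b⁻¹) * (a ^ 2 - α)) := by noncomm_ring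
        _ = b⁻¹ * (α * a - a * α) := by rw [hbinv]; noncomm_ring
        _ = 0 := by rw [hα a]; simp
    · calc -(b⁻¹ * (a ^ 2 - α)) * b + -(b⁻¹ * a * b) * -(b⁻¹ * a * b)
          = -(b⁻¹ * (a ^ 2 - α)) * b + b⁻¹ * a * ((b * b⁻¹) * a * b) := by noncomm_ring
        _ = b⁻¹ * (α * b) := by rw [hbinv]; noncomm_ring
        _ = α := by rw [← hα b, inv_mul_cancel_left₀ hb]

/-- Let `D` be a division ring with center `F`, let `a b c d ∈ D` with `b ≠ 0`, and let
`α ∈ F`.  The 2×2 matrix `A = [[a, b], [c, d]]` over `D` satisfies `A² = α·I` if and only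
if `c = -b⁻¹(a² - α)` and `d = -b⁻¹ a b`.  In particular, the square-central 2×2 matrices
over `D` with nonzero upper-right entry are exactly the matrices
`[[a, b], [-b⁻¹(a² - α), -b⁻¹ a b]]` with `α ∈ F`, `a, b ∈ D`, `b ≠ 0`. -/
theorem square_central_two_by_two_matrices
    {D : Type*} [DivisionRing D] (a b c d : D) (hb : b ≠ 0)
    (α : D) (hα : α ∈ Subring.center D) :
    ((!![a, b; c, d] : Matrix (Fin 2) (Fin 2) D) ^ 2 = Matrix.scalar (Fin 2) α ↔
      c = -(b⁻¹ * (a ^ 2 - α)) ∧ d = -(b⁻¹ * a * b)) ∧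
    {A : Matrix (Fin 2) (Fin 2) D |
        A 0 1 ≠ 0 ∧ ∃ β ∈ Subring.center D, A ^ 2 = Matrix.scalar (Fin 2) β} =
      {A : Matrix (Fin 2) (Fin 2) D |
        ∃ (a' b' β : D), β ∈ Subring.center D ∧ b' ≠ 0 ∧
          A = !![a', b'; -(b'⁻¹ * (a' ^ 2 - β)), -(b'⁻¹ * a' * b')]} := by
  refine ⟨key_iff a b c d hb α hα, ?_⟩
  ext A
  simp only [Set.mem_setOf_eq]
  constructor
  · rintro ⟨h01, β, hβ, hsq⟩
    refine ⟨A 0 0, A 0 1, β, hβ, h01, ?_⟩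
    have hA : A = !![A 0 0, A 0 1; A 1 0, A 1 1] := by
      ext i j; fin_cases i <;> fin_cases j <;> simp
    rw [hA] at hsq
    obtain ⟨hc, hd⟩ := (key_iff (A 0 0) (A 0 1) (A 1 0) (A 1 1) h01 β hβ).mp hsq
    rw [hc, hd] at hA
    exact hA
  · rintro ⟨a', b', β, hβ, hb', rfl⟩
    refine ⟨by simp [hb'], β, hβ, ?_⟩
    exact (key_iff a' b' _ _ hb' β hβ).mpr ⟨rfl, rfl⟩
end

section
/- Let K be a field, let p be a multilinear polynomial in m variables over K, and let a_1,…,a_m be matrix units in M_n(K), i.e., a_k = e_{i_k j_k} is the matrix with 1 in position (i_k, j_k) and 0 elsewhere. Then p(a_1,…,a_m) is either a diagonal matrix or of the form α·e_{ij} for some α ∈ K and some indices i ≠ j. -/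
open Matrix

/-- The multilinear polynomial with coefficients `c : S_m → K`, evaluated at an
`m`-tuple of `n×n` matrices: `(A_1,…,A_m) ↦ Σ_{σ ∈ S_m} c_σ · A_{σ(1)} ⋯ A_{σ(m)}`. -/
noncomputable def mlEval {K : Type*} [Field K] {m n : ℕ}
    (c : Equiv.Perm (Fin m) → K) (A : Fin m → Matrix (Fin n) (Fin n) K) :
    Matrix (Fin n) (Fin n) K :=
  ∑ σ : Equiv.Perm (Fin m), c σ • (List.ofFn fun k => A (σ k)).prod

/-- The matrix unit associated to a pair of indices. -/
private def Eu {K : Type*} [Field K] {n : ℕ} (p : Fin n × Fin n) :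
    Matrix (Fin n) (Fin n) K :=
  Matrix.single p.1 p.2 (1 : K)

/-- The contribution of an edge `p` to the degree count of vertex `w`. -/
private def gfun {n : ℕ} (p : Fin n × Fin n) (w : Fin n) : ℤ :=
  (if p.1 = w then 1 else 0) - (if p.2 = w then 1 else 0)

/-- A product of matrix units is zero or is a matrix unit `e_{uv}` such that the
degree counts are `δ_u - δ_v`. -/
private lemma prod_units {K : Type*} [Field K] {n : ℕ}
    (L : List (Fin n × Fin n)) (h : L ≠ []) :
    (L.map (Eu (K := K))).prod = 0 ∨
    ∃ u v : Fin n, (L.map (Eu (K := K))).prod = Matrix.single u v (1 : K) ∧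
      ∀ w, (L.map (fun p => gfun p w)).sum =
        (if u = w then (1:ℤ) else 0) - (if v = w then 1 else 0) := by
  induction L with
  | nil => exact absurd rfl h
  | cons p t ih =>
    cases t with
    | nil =>
      right
      exact ⟨p.1, p.2, by simp [Eu], fun w => by simp [gfun]⟩
    | cons q r =>
      rw [List.map_cons, List.prod_cons]
      rcases ih (by simp) with h0 | ⟨u, v, hu, hdeg⟩
      · left; rw [h0, mul_zero]
      · rw [hu]
        by_cases hpu : p.2 = u
        · right
          refine ⟨p.1, v, ?_, fun w => ?_⟩
          · simp only [Eu]
            rw [show p.2 = u from hpu, Matrix.single_mul_single_same, one_mul]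
          · rw [List.map_cons, List.sum_cons, hdeg w, gfun, hpu]
            ring
        · left
          simp only [Eu]
          exact Matrix.single_mul_single_of_ne (c := (1 : K)) (i := p.1) (j := p.2) (h := hpu) (d := (1 : K))

/-- If each `a_k` is a matrix unit `e_{i_k j_k}`, then the value of a multilinear
polynomial at `(a_1,…,a_m)` is either a diagonal matrix or a scalar multiple `α·e_{ij}`
of a matrix unit with `i ≠ j`. -/
theorem mlEval_matrix_units_diag_or_offDiag_unit
    {K : Type*} [Field K] {m n : ℕ}
    (c : Equiv.Perm (Fin m) → K) (a : Fin m → Matrix (Fin n) (Fin n) K)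
    (hunits : ∀ k : Fin m, ∃ i j : Fin n, a k = Matrix.single i j (1 : K)) :
    (mlEval c a).IsDiag ∨
      ∃ (α : K) (i j : Fin n), i ≠ j ∧ mlEval c a = Matrix.single i j α := by
  classical
  -- choose the indices of the matrix units
  choose I J hIJ using hunits
  -- handle the degenerate case `m = 0`
  rcases Nat.eq_zero_or_pos m with hm | hm
  · subst hm
    left
    intro x y hxy
    rw [mlEval]
    simp only [Matrix.sum_apply, Matrix.smul_apply]
    refine Finset.sum_eq_zero fun σ _ => ?_
    rw [List.ofFn_zero, List.prod_nil, Matrix.one_apply_ne hxy, smul_zero]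
  -- now `m > 0`
  set P : Equiv.Perm (Fin m) → Matrix (Fin n) (Fin n) K :=
    fun σ => (List.ofFn fun k => a (σ k)).prod with hP
  set L : Equiv.Perm (Fin m) → List (Fin n × Fin n) :=
    fun σ => List.ofFn fun k => (I (σ k), J (σ k)) with hL
  have hLne : ∀ σ, L σ ≠ [] := by
    intro σ
    simp [hL, List.ofFn_eq_nil_iff, hm.ne']
  have hPL : ∀ σ, P σ = ((L σ).map (Eu (K := K))).prod := by
    intro σ
    rw [hP, hL, List.map_ofFn]
    refine congrArg List.prod (congrArg List.ofFn (funext fun k => ?_))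
    simp [Eu, hIJ, Function.comp]
  -- the degree function, independent of σ
  set F : Fin n → ℤ := fun w => ∑ k : Fin m, gfun (I k, J k) w with hF
  have hdegL : ∀ σ w, ((L σ).map (fun p => gfun p w)).sum = F w := by
    intro σ w
    rw [hL, List.map_ofFn, hF]
    rw [List.sum_ofFn]
    exact Equiv.sum_comp σ (fun k => gfun (I k, J k) w)
  -- structure of each term
  have key : ∀ σ, P σ = 0 ∨
      ∃ u v : Fin n, P σ = Matrix.single u v (1 : K) ∧
        ∀ w, F w = (if u = w then (1:ℤ) else 0) - (if v = w then 1 else 0) := by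
    intro σ
    rcases prod_units (K := K) (L σ) (hLne σ) with h0 | ⟨u, v, hu, hdeg⟩
    · left; rw [hPL σ, h0]
    · right
      exact ⟨u, v, by rw [hPL σ, hu], fun w => by rw [← hdegL σ w, hdeg w]⟩
  by_cases hex : ∃ σ u v, u ≠ v ∧ P σ = Matrix.single u v (1 : K) ∧
      ∀ w, F w = (if u = w then (1:ℤ) else 0) - (if v = w then 1 else 0)
  · -- off-diagonal case
    obtain ⟨σ₀, u₀, v₀, huv₀, hP₀, hF₀⟩ := hex
    right
    -- every nonzero term equals `e_{u₀ v₀}`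
    have hall : ∀ σ, P σ = 0 ∨ P σ = Matrix.single u₀ v₀ (1 : K) := by
      intro σ
      rcases key σ with h0 | ⟨u, v, hu, hdeg⟩
      · left; exact h0
      · right
        have huv : u ≠ v := by
          rintro rfl
          have h := (hdeg u₀).symm.trans (hF₀ u₀)
          rw [if_neg (Ne.symm huv₀), if_pos rfl] at h
          split_ifs at h <;> omega
        have hu0 : u = u₀ := by
          have h := (hdeg u).symm.trans (hF₀ u)
          rw [if_pos rfl, if_neg (Ne.symm huv)] at h
          by_contra hne
          rw [if_neg (fun hh : u₀ = u => hne hh.symm)] at h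
          split_ifs at h <;> omega
        have hv0 : v = v₀ := by
          have h := (hdeg v).symm.trans (hF₀ v)
          rw [if_neg huv, if_pos rfl] at h
          by_contra hne
          rw [if_neg (fun hh : v₀ = v => hne hh.symm)] at h
          split_ifs at h <;> omega
        rw [hu, hu0, hv0]
    refine ⟨∑ σ : Equiv.Perm (Fin m), (if P σ = 0 then 0 else c σ), u₀, v₀, huv₀, ?_⟩
    rw [mlEval]
    have : ∀ σ : Equiv.Perm (Fin m),
        c σ • P σ = (if P σ = 0 then 0 else c σ) • Matrix.single u₀ v₀ (1 : K) := by
      intro σ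
      by_cases h0 : P σ = 0
      · rw [h0, if_pos rfl, smul_zero, zero_smul]
      · rcases hall σ with h | h
        · exact absurd h h0
        · rw [if_neg h0, h]
    calc (∑ σ : Equiv.Perm (Fin m), c σ • P σ)
        = ∑ σ : Equiv.Perm (Fin m),
            (if P σ = 0 then 0 else c σ) • Matrix.single u₀ v₀ (1 : K) := by
          exact Finset.sum_congr rfl fun σ _ => this σ
      _ = (∑ σ : Equiv.Perm (Fin m), (if P σ = 0 then 0 else c σ)) •
            Matrix.single u₀ v₀ (1 : K) := by rw [Finset.sum_smul]
      _ = _ := by rw [Matrix.smul_single, smul_eq_mul, mul_one]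
  · -- diagonal case: every nonzero term is `e_{uu}`
    left
    push_neg at hex
    intro x y hxy
    rw [mlEval]
    simp only [Matrix.sum_apply, Matrix.smul_apply]
    refine Finset.sum_eq_zero fun σ _ => ?_
    change c σ • P σ x y = 0
    rcases key σ with h0 | ⟨u, v, hu, hdeg⟩
    · rw [h0]; simp
    · have huv : u = v := by
        by_contra hne
        obtain ⟨w, hw⟩ := hex σ u v hne hu
        exact hw (hdeg w)
      subst huv
      rw [hu]
      have : ¬ (u = x ∧ u = y) := by
        rintro ⟨rfl, rfl⟩; exact hxy rfl
      rw [Matrix.single, Matrix.of_apply, if_neg this, smul_zero]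
end

section
/- Let K be an infinite field and let p be a multilinear polynomial in m variables over K that neither vanishes identically on M_n(K) nor takes only scalar values on M_n(K). Then there exist matrices a_1,…,a_m ∈ M_n(K) and a nonzero α ∈ K such that the characteristic polynomial of p(a_1,…,a_m) equals X^n − α; equivalently, the image of p contains a matrix whose eigenvalues (in an algebraic closure of K) are c, cε, cε², …, cε^{n−1} for some n-th root c of α, where ε is a primitive n-th root of unity when char K does not divide n. -/
set_option linter.unusedSectionVars false
set_option maxHeartbeats 1000000

open Matrix Polynomial


section MLAux

variable {K : Type*} [Field K] {m : ℕ}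

/-- Algebra-valued version of `mlEval`. -/
noncomputable def mlEvalS {S : Type*} [Semiring S] [Algebra K S]
    (c : Equiv.Perm (Fin m) → K) (A : Fin m → S) : S :=
  ∑ σ : Equiv.Perm (Fin m), c σ • (List.ofFn fun k => A (σ k)).prod

/-- `mlEvalS` as a multilinear map. -/
noncomputable def mlF {S : Type*} [Semiring S] [Algebra K S]
    (c : Equiv.Perm (Fin m) → K) : MultilinearMap K (fun _ : Fin m => S) S :=
  ∑ σ : Equiv.Perm (Fin m), c σ • (MultilinearMap.mkPiAlgebraFin K m S).domDomCongr σ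

lemma mlF_apply {S : Type*} [Semiring S] [Algebra K S]
    (c : Equiv.Perm (Fin m) → K) (A : Fin m → S) : mlF c A = mlEvalS c A := by
  simp [mlF, mlEvalS, MultilinearMap.sum_apply]

lemma mlEvalS_map {S S' : Type*} [Semiring S] [Algebra K S] [Semiring S'] [Algebra K S']
    (φ : S →ₐ[K] S') (c : Equiv.Perm (Fin m) → K) (A : Fin m → S) :
    φ (mlEvalS c A) = mlEvalS c (fun k => φ (A k)) := by
  unfold mlEvalS
  rw [map_sum]
  refine Finset.sum_congr rfl fun σ _ => ?_
  rw [_root_.map_smul, map_list_prod, List.map_ofFn]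
  rfl

lemma conj_list_prod {S : Type*} [Monoid S] (u v : S) (h1 : u * v = 1) (h2 : v * u = 1) :
    ∀ l : List S, (l.map fun x => u * x * v).prod = u * l.prod * v := by
  intro l
  induction l with
  | nil =>
      simp only [List.map_nil, List.prod_nil, mul_one]
      exact h1.symm
  | cons a t ih =>
      rw [List.map_cons, List.prod_cons, ih, List.prod_cons]
      simp only [mul_assoc]
      rw [← mul_assoc v u, h2, one_mul]

lemma mlEvalS_conj {S : Type*} [Ring S] [Algebra K S] (u v : S) (h1 : u * v = 1)
    (h2 : v * u = 1) (c : Equiv.Perm (Fin m) → K) (A : Fin m → S) :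
    mlEvalS c (fun k => u * A k * v) = u * mlEvalS c A * v := by
  unfold mlEvalS
  rw [Finset.mul_sum, Finset.sum_mul]
  refine Finset.sum_congr rfl fun σ _ => ?_
  rw [mul_smul_comm, smul_mul_assoc]
  congr 1
  have := conj_list_prod u v h1 h2 (List.ofFn fun k => A (σ k))
  rw [List.map_ofFn] at this
  rw [← this]
  rfl

lemma mlEval_eq_mlEvalS {n : ℕ} (c : Equiv.Perm (Fin m) → K)
    (A : Fin m → Matrix (Fin n) (Fin n) K) :
    (∑ σ : Equiv.Perm (Fin m), c σ • (List.ofFn fun k => A (σ k)).prod) = mlEvalS c A := rfl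

end MLAux


section Grading

variable {K : Type*} [Field K] {m n : ℕ} [NeZero n]

/-- Degree-`g` component of the cyclic grading of `M_n(K)`. -/
def Dsub (g : Fin n) : Submodule K (Matrix (Fin n) (Fin n) K) where
  carrier := {M | ∀ i j : Fin n, j ≠ i + g → M i j = 0}
  add_mem' := by
    intro a b ha hb i j h
    simp [Matrix.add_apply, ha i j h, hb i j h]
  zero_mem' := by intro i j _; rfl
  smul_mem' := by
    intro k M hM i j h
    simp [Matrix.smul_apply, hM i j h]

lemma one_mem_Dsub : (1 : Matrix (Fin n) (Fin n) K) ∈ Dsub (0 : Fin n) := by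
  intro i j h
  rw [add_zero] at h
  exact Matrix.one_apply_ne (Ne.symm h)

lemma mul_mem_Dsub {a b : Fin n} {x y : Matrix (Fin n) (Fin n) K}
    (hx : x ∈ Dsub a) (hy : y ∈ Dsub b) : x * y ∈ Dsub (a + b) := by
  intro i j h
  rw [Matrix.mul_apply]
  apply Finset.sum_eq_zero
  intro t _
  by_cases ht : t = i + a
  · subst ht
    rw [hy _ _ (fun hj => h (by rw [hj, add_assoc])), mul_zero]
  · rw [hx _ _ ht, zero_mul]

lemma list_prod_mem_Dsub {ι : Type*} (l : List ι) (x : ι → Matrix (Fin n) (Fin n) K)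
    (d : ι → Fin n) (h : ∀ i ∈ l, x i ∈ Dsub (d i)) :
    (l.map x).prod ∈ Dsub ((l.map d).sum) := by
  induction l with
  | nil => simpa using one_mem_Dsub
  | cons a t ih =>
      simp only [List.map_cons, List.prod_cons, List.sum_cons]
      exact mul_mem_Dsub (h a List.mem_cons_self) (ih fun i hi => h i (List.mem_cons_of_mem a hi))

lemma mlEvalS_mem_Dsub (c : Equiv.Perm (Fin m) → K) (g : Fin m → Fin n)
    (x : Fin m → Matrix (Fin n) (Fin n) K) (hx : ∀ k, x k ∈ Dsub (g k)) :
    mlEvalS c x ∈ Dsub (∑ k, g k) := by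
  apply Submodule.sum_mem
  intro σ _
  apply Submodule.smul_mem
  have h := list_prod_mem_Dsub (List.finRange m) (x ∘ σ) (g ∘ σ) (fun i _ => hx (σ i))
  rw [← List.ofFn_eq_map, ← List.ofFn_eq_map] at h
  have hsum : (List.ofFn (g ∘ σ)).sum = ∑ k, g k := by
    rw [List.sum_ofFn]
    exact Fintype.sum_equiv σ _ _ (fun i => rfl)
  rw [hsum] at h
  exact h

/-- The degree-`g` component of a matrix. -/
def gradeComp (g : Fin n) (A : Matrix (Fin n) (Fin n) K) : Matrix (Fin n) (Fin n) K :=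
  Matrix.of fun i j => if j = i + g then A i j else 0

lemma gradeComp_mem (g : Fin n) (A : Matrix (Fin n) (Fin n) K) : gradeComp g A ∈ Dsub g :=
  fun _ _ h => if_neg h

lemma sum_gradeComp (A : Matrix (Fin n) (Fin n) K) : (∑ g, gradeComp g A) = A := by
  ext i j
  rw [Matrix.sum_apply]
  have : ∀ g : Fin n, (gradeComp g A i j) = if g = j - i then A i j else 0 := by
    intro g
    show (if j = i + g then A i j else 0) = _
    congr 1
    simp only [eq_iff_iff]
    constructor
    · rintro rfl; rw [add_sub_cancel_left]
    · rintro rfl; rw [add_sub_cancel]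
  simp_rw [this]
  simp

end Grading

-- need mlEvalS from aux1 : inline it here for testing


section Shift

variable {K : Type*} [Field K] {k : ℕ}

lemma sub_one_ne_self (j : Fin (k + 2)) : j - 1 ≠ j := by
  intro h
  exact one_ne_zero (sub_eq_self.mp h)

open Fin.NatCast in
lemma perm_rigid (σ : Equiv.Perm (Fin (k + 2))) (h : ∀ i, σ i = i ∨ σ i = i - 1) :
    σ = 1 ∨ σ = Equiv.subRight 1 := by
  by_cases hσ : σ = 1
  · exact Or.inl hσ
  right
  have hex : ∃ i, σ i ≠ i := by
    by_contra hc
    push_neg at hc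
    exact hσ (Equiv.ext fun i => hc i)
  obtain ⟨i1, hi1⟩ := hex
  have hstep : ∀ j : Fin (k + 2), σ j = j - 1 → σ (j - 1) = j - 1 - 1 := by
    intro j hj
    rcases h (j - 1) with h' | h'
    · exfalso
      have : j - 1 = j := σ.injective (by rw [h', hj])
      exact sub_one_ne_self j this
    · exact h'
  have hd : ∀ d : ℕ, σ (i1 - (d : Fin (k + 2))) = i1 - (d : Fin (k + 2)) - 1 := by
    intro d
    induction d with
    | zero => simpa using (h i1).resolve_left hi1
    | succ d ih =>
        have : i1 - ((d + 1 : ℕ) : Fin (k + 2)) = i1 - (d : Fin (k + 2)) - 1 := by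
          push_cast
          rw [sub_add_eq_sub_sub]
        rw [this]
        exact hstep _ ih
  apply Equiv.ext
  intro i
  have := hd ((i1 - i).val)
  rw [Fin.cast_val_eq_self, sub_sub_cancel] at this
  simpa [Equiv.subRight_apply] using this

lemma charpoly_shift (v : Matrix (Fin (k + 2)) (Fin (k + 2)) K)
    (hv : ∀ i j : Fin (k + 2), j ≠ i + 1 → v i j = 0) :
    v.charpoly = X ^ (k + 2) - C (∏ i, v i (i + 1)) := by
  have hdet : v.charpoly = (charmatrix v).det := rfl
  rw [hdet, Matrix.det_apply']
  set ρ : Equiv.Perm (Fin (k + 2)) := Equiv.subRight 1 with hρ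
  have hρ_apply : ∀ i, ρ i = i - 1 := fun i => rfl
  have hρ_ne : ρ ≠ 1 := by
    intro h
    have h0 : (0 : Fin (k+2)) - 1 = 0 := by
      have := congrArg (fun e : Equiv.Perm (Fin (k+2)) => e 0) h
      simpa [hρ_apply] using this
    exact sub_one_ne_self 0 h0
  -- terms outside {1, ρ} vanish
  have hzero : ∀ σ ∈ (Finset.univ : Finset (Equiv.Perm (Fin (k+2)))),
      σ ∉ ({1, ρ} : Finset (Equiv.Perm (Fin (k+2)))) →
      ((Equiv.Perm.sign σ : ℤ) : K[X]) * ∏ i, charmatrix v (σ i) i = 0 := by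
    intro σ _ hσ
    simp only [Finset.mem_insert, Finset.mem_singleton] at hσ
    push_neg at hσ
    have hnot : ¬ ∀ i, σ i = i ∨ σ i = i - 1 := by
      intro hall
      rcases perm_rigid σ hall with h | h
      · exact hσ.1 h
      · exact hσ.2 h
    push_neg at hnot
    obtain ⟨i, hi⟩ := hnot
    have hfac : charmatrix v (σ i) i = 0 := by
      rw [charmatrix_apply_ne _ _ _ hi.1]
      have : v (σ i) i = 0 := by
        apply hv
        intro hcon
        have h2 : i - 1 = σ i := by conv_lhs => rw [hcon, add_sub_cancel_right]
        exact hi.2 h2.symm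
      rw [this, map_zero, neg_zero]
    rw [Finset.prod_eq_zero (f := fun j => charmatrix v (σ j) j) (Finset.mem_univ i) hfac, mul_zero]
  rw [← Finset.sum_subset (Finset.subset_univ ({1, ρ} : Finset (Equiv.Perm (Fin (k+2))))) hzero]
  rw [Finset.sum_pair (Ne.symm hρ_ne)]
  have hterm1 : ((Equiv.Perm.sign (1 : Equiv.Perm (Fin (k+2))) : ℤ) : K[X]) *
      ∏ i, charmatrix v ((1 : Equiv.Perm (Fin (k+2))) i) i = X ^ (k + 2) := by
    have hdiag : ∀ i : Fin (k+2), charmatrix v i i = X := by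
      intro i
      rw [charmatrix_apply_eq]
      have : v i i = 0 := hv i i (fun h => by
        have : (1 : Fin (k+2)) = 0 := by
          have := left_eq_add.mp h
          exact this
        exact one_ne_zero this)
      rw [this, map_zero, sub_zero]
    simp only [Equiv.Perm.sign_one, Units.val_one, Int.cast_one, one_mul, Equiv.Perm.coe_one,
      id_eq]
    rw [Finset.prod_congr rfl (fun i _ => hdiag i), Finset.prod_const,
      Finset.card_univ, Fintype.card_fin]
  have hρ_sign : Equiv.Perm.sign ρ = (-1 : ℤˣ) ^ (k + 1) := by
    have hinv : ρ⁻¹ = finRotate (k + 2) := by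
      apply Equiv.ext
      intro i
      apply ρ.injective
      rw [← Equiv.Perm.mul_apply, mul_inv_cancel, Equiv.Perm.one_apply]
      rw [hρ_apply, finRotate_succ_apply, add_sub_cancel_right]
    have := Equiv.Perm.sign_inv ρ
    rw [hinv, sign_finRotate] at this
    rw [← this]; rfl
  have htermρ : ((Equiv.Perm.sign ρ : ℤ) : K[X]) * ∏ i, charmatrix v (ρ i) i
      = - C (∏ i, v i (i + 1)) := by
    have hfac : ∀ i : Fin (k+2), charmatrix v (ρ i) i = - C (v (i - 1) i) := by
      intro i
      rw [hρ_apply, charmatrix_apply_ne _ _ _ (sub_one_ne_self i)]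
    rw [Finset.prod_congr rfl (fun i _ => hfac i)]
    have hprodneg : (∏ i : Fin (k+2), (- C (v (i - 1) i) : K[X]))
        = (-1 : K[X]) ^ (k + 2) * ∏ i : Fin (k+2), C (v (i - 1) i) := by
      have : ∀ i : Fin (k+2), (- C (v (i - 1) i) : K[X]) = (-1 : K[X]) * C (v (i - 1) i) :=
        fun i => by ring
      rw [Finset.prod_congr rfl (fun i _ => this i), Finset.prod_mul_distrib,
        Finset.prod_const, Finset.card_univ, Fintype.card_fin]
    have hreidx : (∏ i : Fin (k+2), (v (i - 1) i)) = ∏ i, v i (i + 1) := by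
      apply Fintype.prod_equiv ρ
      intro i
      rw [hρ_apply, sub_add_cancel]
    rw [hprodneg, ← map_prod, hreidx, hρ_sign]
    have hcast : (((((-1 : ℤˣ) ^ (k + 1) : ℤˣ) : ℤ)) : K[X]) = (-1 : K[X]) ^ (k + 1) := by
      rw [Units.val_pow_eq_pow_val, Units.val_neg, Units.val_one]
      rw [Int.cast_pow, Int.cast_neg, Int.cast_one]
    rw [hcast, ← mul_assoc, ← pow_add]
    have hodd : Odd (k + 1 + (k + 2)) := ⟨k + 1, by ring⟩
    rw [hodd.neg_one_pow]
    ring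
  rw [hterm1, htermρ]
  ring

end Shift


section MoreAux

variable {K : Type*} [Field K] {m n : ℕ} [NeZero n]

/-- Matrices vanishing on the (cyclic) superdiagonal. -/
def Usub : Submodule K (Matrix (Fin n) (Fin n) K) where
  carrier := {M | ∀ i, M i (i + 1) = 0}
  add_mem' := by
    intro a b ha hb i
    simp [Matrix.add_apply, ha i, hb i]
  zero_mem' := by intro i; rfl
  smul_mem' := by
    intro t M hM i
    simp [Matrix.smul_apply, hM i]

/-- A matrix supported on the `g`-shifted diagonal with entries `y`. -/
def homogMat {R : Type*} [Semiring R] (g : Fin n) (y : Fin n → R) :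
    Matrix (Fin n) (Fin n) R := Matrix.of fun i j => if j = i + g then y i else 0

lemma homogMat_mem (g : Fin n) (y : Fin n → K) : homogMat g y ∈ Dsub g :=
  fun _ _ h => if_neg h

lemma Efact1 (i j : Fin n) (h : i ≠ j) :
    (Matrix.single i j (1:K)) * (Matrix.single i j (1:K)) = 0 :=
  Matrix.single_mul_single_of_ne (1:K) i j i (Ne.symm h) 1

lemma Efact2 (i j : Fin n) (x : Matrix (Fin n) (Fin n) K) :
    (Matrix.single i j (1:K)) * x * (Matrix.single i j (1:K))
      = x j i • Matrix.single i j (1:K) := by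
  rw [mul_assoc]
  ext a b
  by_cases ha : a = i
  · subst ha
    by_cases hb : b = j
    · subst hb; simp
    · simp [hb, Ne.symm hb]
  · simp [ha, Ne.symm ha]

lemma Efact3 (i j : Fin n) (x : Matrix (Fin n) (Fin n) K)
    (hx : ∀ a b, a ≠ b → x a b = 0) :
    (Matrix.single i j (1:K)) * x - x * (Matrix.single i j (1:K))
      = (x j j - x i i) • Matrix.single i j (1:K) := by
  ext a b
  by_cases ha : a = i
  · subst ha
    by_cases hb : b = j
    · subst hb; simp
    · simp [hb, Ne.symm hb, hx j b (fun h => hb h.symm)]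
  · by_cases hb : b = j
    · subst hb
      simp [ha, Ne.symm ha, hx a i ha]
    · simp [ha, hb, Ne.symm ha, Ne.symm hb]

end MoreAux


section GenericAux

variable {K : Type*} [Field K] {m n : ℕ} [NeZero n]

lemma mlEvalS_homog_entry (c : Equiv.Perm (Fin m) → K) (g : Fin m → Fin n)
    (y : Fin m → Fin n → K) (i j : Fin n) :
    (mlEvalS c fun t => homogMat (g t) (y t)) i j
      = MvPolynomial.aeval (fun p : Fin m × Fin n => y p.1 p.2)
          ((mlEvalS c fun t => homogMat (g t) fun i' =>
            (MvPolynomial.X (t, i') : MvPolynomial (Fin m × Fin n) K)) i j) := by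
  have hφ := mlEvalS_map
    (AlgHom.mapMatrix (MvPolynomial.aeval fun p : Fin m × Fin n => y p.1 p.2))
    c (fun t => homogMat (g t) fun i' => (MvPolynomial.X (t, i') : MvPolynomial (Fin m × Fin n) K))
  have hmat : (fun t => (AlgHom.mapMatrix
        (MvPolynomial.aeval fun p : Fin m × Fin n => y p.1 p.2))
        (homogMat (g t) fun i' => (MvPolynomial.X (t, i') : MvPolynomial (Fin m × Fin n) K)))
      = fun t => homogMat (g t) (y t) := by
    funext t
    ext a b
    simp [homogMat, apply_ite (MvPolynomial.aeval fun p : Fin m × Fin n => y p.1 p.2),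
        apply_ite (MvPolynomial.eval fun p : Fin m × Fin n => y p.1 p.2)]
  rw [hmat] at hφ
  rw [← hφ]
  rfl

lemma homogMat_reindex (g : Fin n) (y : Fin n → K) :
    Matrix.reindex (Equiv.subRight (1 : Fin n)).symm (Equiv.subRight (1 : Fin n)).symm
        (homogMat g y)
      = homogMat g (fun i => y (i - 1)) := by
  ext a b
  rw [Matrix.reindex_apply, Matrix.submatrix_apply]
  simp only [Equiv.symm_symm, Equiv.subRight_apply]
  show (if b - 1 = a - 1 + g then y (a - 1) else 0) = (if b = a + g then y (a - 1) else 0)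
  congr 1
  simp only [eq_iff_iff]
  constructor
  · intro h
    have := sub_eq_iff_eq_add.mp h
    rw [this]; abel
  · intro h
    rw [h]; abel

end GenericAux

/-- If `K` is an infinite field and the multilinear polynomial `p` neither vanishes
identically on `M_n(K)` nor takes only scalar values on `M_n(K)`, then some value of `p`
has characteristic polynomial `Xⁿ - α` with `α ≠ 0` (so its eigenvalues in an algebraic
closure are `c, cε, …, cε^{n-1}` for an `n`-th root `c` of `α`). -/
theorem exists_value_with_charpoly_X_pow_sub_C
    {K : Type*} [Field K] [Infinite K] {m n : ℕ}
    (c : Equiv.Perm (Fin m) → K)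
    (hnz : ∃ A : Fin m → Matrix (Fin n) (Fin n) K, mlEval c A ≠ 0)
    (hns : ∃ A : Fin m → Matrix (Fin n) (Fin n) K,
      ∀ lam : K, mlEval c A ≠ lam • (1 : Matrix (Fin n) (Fin n) K)) :
    ∃ (A : Fin m → Matrix (Fin n) (Fin n) K) (α : K), α ≠ 0 ∧
      (mlEval c A).charpoly = Polynomial.X ^ n - Polynomial.C α := by
  classical
  obtain ⟨A₀, hA₀⟩ := hns
  have hn2 : 2 ≤ n := by
    by_contra hlt
    push_neg at hlt
    interval_cases n
    · exact hA₀ 0 (Subsingleton.elim _ _)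
    · exact hA₀ ((mlEval c A₀) 0 0) (by
        ext i j
        fin_cases i; fin_cases j
        simp [Matrix.smul_apply, Matrix.one_apply])
  obtain ⟨k, rfl⟩ : ∃ k, n = k + 2 := ⟨n - 2, by omega⟩
  have hml : ∀ A : Fin m → Matrix (Fin (k+2)) (Fin (k+2)) K, mlEval c A = mlEvalS c A :=
    fun _ => rfl
  set L : Submodule K (Matrix (Fin (k+2)) (Fin (k+2)) K) :=
    Submodule.span K (Set.range fun A : Fin m → Matrix (Fin (k+2)) (Fin (k+2)) K =>
      mlEvalS c A) with hLdef
  have hrange : ∀ A, mlEvalS c A ∈ L := fun A => Submodule.subset_span ⟨A, rfl⟩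
  have hconjL : ∀ u v : Matrix (Fin (k+2)) (Fin (k+2)) K, u * v = 1 → v * u = 1 →
      ∀ x ∈ L, u * x * v ∈ L := by
    intro u v h1 h2 x hx
    induction hx using Submodule.span_induction with
    | mem y hy =>
        obtain ⟨A, rfl⟩ := hy
        rw [← mlEvalS_conj u v h1 h2 c A]
        exact hrange _
    | zero => rw [mul_zero, zero_mul]; exact L.zero_mem
    | add a b _ _ iha ihb => rw [mul_add, add_mul]; exact L.add_mem iha ihb
    | smul t a _ ih => rw [mul_smul_comm, smul_mul_assoc]; exact L.smul_mem t ih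
  have hreL : ∀ e : Fin (k+2) ≃ Fin (k+2), ∀ x ∈ L,
      (Matrix.reindexAlgEquiv K K e) x ∈ L := by
    intro e x hx
    induction hx using Submodule.span_induction with
    | mem y hy =>
        obtain ⟨A, rfl⟩ := hy
        have h2 := mlEvalS_map (Matrix.reindexAlgEquiv K K e).toAlgHom c A
        simp only [AlgEquiv.coe_algHom] at h2
        rw [h2]
        exact hrange _
    | zero => rw [map_zero]; exact L.zero_mem
    | add a b _ _ iha ihb => rw [map_add]; exact L.add_mem iha ihb
    | smul t a _ ih => rw [_root_.map_smul]; exact L.smul_mem t ih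
  set x₀ : Matrix (Fin (k+2)) (Fin (k+2)) K := mlEvalS c A₀ with hx₀def
  have hx₀L : x₀ ∈ L := hrange A₀
  have hA₀' : ∀ lam : K, x₀ ≠ lam • 1 := fun lam h => hA₀ lam (by rw [hml]; exact h)
  obtain ⟨t₀, ht₀⟩ := Infinite.exists_notMem_finset ({0, 1} : Finset K)
  have ht0 : t₀ ≠ 0 := fun h => ht₀ (by simp [h])
  have ht1 : t₀ ≠ 1 := fun h => ht₀ (by simp [h])
  have subkey : ∀ N : Matrix (Fin (k+2)) (Fin (k+2)) K, N * N = 0 → ∀ x ∈ L,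
      (N * x - x * N) ∈ L ∧ N * x * N ∈ L := by
    intro N hN x hx
    have ha : ∀ t : K, (t • N) * (t • N) = 0 := by
      intro t
      rw [smul_mul_assoc, mul_smul_comm, hN, smul_zero, smul_zero]
    have hu : ∀ t : K, (1 + t • N) * (1 - t • N) = 1 := by
      intro t
      have h : (1 + t • N) * (1 - t • N) = 1 - (t • N) * (t • N) := by
        rw [add_mul, one_mul, mul_sub, mul_one]
        abel
      rw [h, ha, sub_zero]
    have hu' : ∀ t : K, (1 - t • N) * (1 + t • N) = 1 := by
      intro t
      have h : (1 - t • N) * (1 + t • N) = 1 - (t • N) * (t • N) := by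
        rw [sub_mul, one_mul, mul_add, mul_one]
        abel
      rw [h, ha, sub_zero]
    have hz : ∀ t : K, t • (N * x - x * N) - (t * t) • (N * x * N) ∈ L := by
      intro t
      have hmem := hconjL (1 + t • N) (1 - t • N) (hu t) (hu' t) x hx
      have hexp : (1 + t • N) * x * (1 - t • N)
          = x + (t • (N * x - x * N) - (t * t) • (N * x * N)) := by
        rw [add_mul, one_mul, smul_mul_assoc, mul_sub, mul_one, add_mul]
        rw [mul_smul_comm, smul_mul_assoc, mul_smul_comm, smul_smul, smul_sub]
        abel
      rw [hexp] at hmem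
      have h := L.sub_mem hmem hx
      simpa using h
    have hz1 : (N * x - x * N) - N * x * N ∈ L := by simpa using hz 1
    have hzt := hz t₀
    have hcomb : t₀ • ((N * x - x * N) - N * x * N)
        - (t₀ • (N * x - x * N) - (t₀ * t₀) • (N * x * N))
        = (t₀ * t₀ - t₀) • (N * x * N) := by module
    have hbmem : (t₀ * t₀ - t₀) • (N * x * N) ∈ L := by
      rw [← hcomb]; exact L.sub_mem (L.smul_mem t₀ hz1) hzt
    have hne : t₀ * t₀ - t₀ ≠ 0 := by
      intro h
      apply ht1
      have h2 : t₀ * t₀ = t₀ * 1 := by rw [mul_one]; exact sub_eq_zero.mp h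
      exact mul_left_cancel₀ ht0 h2
    have hb : N * x * N ∈ L := by
      have h := L.smul_mem (t₀ * t₀ - t₀)⁻¹ hbmem
      rwa [smul_smul, inv_mul_cancel₀ hne, one_smul] at h
    refine ⟨?_, hb⟩
    have h := L.add_mem hz1 hb
    simpa using h
  have hEL : ∃ i j : Fin (k+2), i ≠ j ∧ Matrix.single i j (1:K) ∈ L := by
    by_cases hoff : ∃ i j, i ≠ j ∧ x₀ i j ≠ 0
    · obtain ⟨i, j, hij, hne⟩ := hoff
      have hb := (subkey _ (Efact1 j i hij.symm) x₀ hx₀L).2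
      rw [Efact2 j i x₀] at hb
      refine ⟨j, i, hij.symm, ?_⟩
      have h := L.smul_mem (x₀ i j)⁻¹ hb
      rwa [smul_smul, inv_mul_cancel₀ hne, one_smul] at h
    · push_neg at hoff
      have hdiag : ∃ i j : Fin (k+2), i ≠ j ∧ x₀ i i ≠ x₀ j j := by
        by_contra hc
        push_neg at hc
        apply hA₀' (x₀ 0 0)
        ext i j
        by_cases hij : i = j
        · subst hij
          rw [Matrix.smul_apply, Matrix.one_apply_eq, smul_eq_mul, mul_one]
          by_cases h0 : i = 0
          · rw [h0]
          · exact hc i 0 h0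
        · rw [hoff i j hij, Matrix.smul_apply, Matrix.one_apply_ne hij, smul_zero]
      obtain ⟨i, j, hij, hne⟩ := hdiag
      have ha := (subkey _ (Efact1 i j hij) x₀ hx₀L).1
      rw [Efact3 i j x₀ hoff] at ha
      refine ⟨i, j, hij, ?_⟩
      have hsub : x₀ j j - x₀ i i ≠ 0 := sub_ne_zero.mpr (Ne.symm hne)
      have h := L.smul_mem (x₀ j j - x₀ i i)⁻¹ ha
      rwa [smul_smul, inv_mul_cancel₀ hsub, one_smul] at h
  obtain ⟨i0, j0, hij0, hEij⟩ := hEL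
  have hE01 : Matrix.single (0 : Fin (k+2)) 1 (1:K) ∈ L := by
    have hswl : (Equiv.swap i0 0) i0 = 0 := Equiv.swap_apply_left i0 0
    have hj0' : (Equiv.swap i0 0) j0 ≠ 0 := by
      intro h
      exact hij0 ((Equiv.swap i0 0).injective (hswl.trans h.symm))
    set e : Fin (k+2) ≃ Fin (k+2) :=
      (Equiv.swap i0 0).trans (Equiv.swap ((Equiv.swap i0 0) j0) 1) with he
    have he0 : e i0 = 0 := by
      rw [he, Equiv.trans_apply, hswl]
      exact Equiv.swap_apply_of_ne_of_ne (Ne.symm hj0') zero_ne_one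
    have he1 : e j0 = 1 := by
      rw [he, Equiv.trans_apply, Equiv.swap_apply_left]
    have hmem := hreL e _ hEij
    have heq : (Matrix.reindexAlgEquiv K K e) (Matrix.single i0 j0 (1:K))
        = Matrix.single (0 : Fin (k+2)) 1 (1:K) := by
      rw [Matrix.reindexAlgEquiv_apply, Matrix.reindex_apply]
      ext a b
      rw [Matrix.submatrix_apply]
      by_cases hab : i0 = e.symm a ∧ j0 = e.symm b
      · obtain ⟨h1, h2⟩ := hab
        have ha' : (0 : Fin (k+2)) = a := by rw [← he0, h1, Equiv.apply_symm_apply]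
        have hb' : (1 : Fin (k+2)) = b := by rw [← he1, h2, Equiv.apply_symm_apply]
        rw [← h1, ← h2, ← ha', ← hb', Matrix.single_apply_same,
          Matrix.single_apply_same]
      · rw [Matrix.single_apply_of_ne _ _ _ _ _ hab]
        have hab' : ¬ ((0 : Fin (k+2)) = a ∧ (1 : Fin (k+2)) = b) := by
          rintro ⟨h1, h2⟩
          apply hab
          constructor
          · rw [← he0] at h1
            have := congrArg e.symm h1
            rwa [Equiv.symm_apply_apply] at this
          · rw [← he1] at h2
            have := congrArg e.symm h2
            rwa [Equiv.symm_apply_apply] at this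
        rw [Matrix.single_apply_of_ne _ _ _ _ _ hab']
    rw [heq] at hmem
    exact hmem
  -- extract a homogeneous tuple of total degree 1 with nonzero superdiagonal entry
  by_cases hdeg : ∀ g : Fin m → Fin (k+2), (∑ t, g t) = 1 →
      ∀ x : Fin m → Matrix (Fin (k+2)) (Fin (k+2)) K, (∀ t, x t ∈ Dsub (g t)) →
      ∀ i, (mlEvalS c x) i (i+1) = 0
  · exfalso
    have hLU : L ≤ (Usub : Submodule K (Matrix (Fin (k+2)) (Fin (k+2)) K)) := by
      rw [hLdef, Submodule.span_le]
      rintro _ ⟨A, rfl⟩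
      intro i
      have hdecomp : mlEvalS c A
          = ∑ G : Fin m → Fin (k+2), mlEvalS c (fun t => gradeComp (G t) (A t)) := by
        conv_lhs => rw [show A = (fun t => ∑ h : Fin (k+2), gradeComp h (A t)) from
          funext fun t => (sum_gradeComp (A t)).symm]
        rw [← mlF_apply, MultilinearMap.map_sum]
        exact Finset.sum_congr rfl fun G _ => mlF_apply c _
      show (mlEvalS c A) i (i+1) = 0
      rw [hdecomp, Matrix.sum_apply]
      apply Finset.sum_eq_zero
      intro G _
      by_cases hG : (∑ t, G t) = 1
      · exact hdeg G hG _ (fun t => gradeComp_mem _ _) i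
      · have hmem := mlEvalS_mem_Dsub c G (fun t => gradeComp (G t) (A t))
          (fun t => gradeComp_mem _ _)
        exact hmem i (i+1) (fun h => hG (add_left_cancel h).symm)
    have h01 := hLU hE01 0
    rw [zero_add, Matrix.single_apply_same] at h01
    exact one_ne_zero h01
  · push_neg at hdeg
    obtain ⟨g, hg1, xh, hxhmem, i0, hi0⟩ := hdeg
    -- generic evaluation
    set f : (Fin m → Fin (k+2) → K) → Fin (k+2) → K :=
      fun y i => (mlEvalS c fun t => homogMat (g t) (y t)) i (i+1) with hfdef
    set P : Fin (k+2) → MvPolynomial (Fin m × Fin (k+2)) K :=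
      fun i => (mlEvalS c fun t => homogMat (g t) fun i' =>
        (MvPolynomial.X (t, i') : MvPolynomial (Fin m × Fin (k+2)) K)) i (i+1) with hPdef
    have heval : ∀ y i, f y i
        = MvPolynomial.aeval (fun p : Fin m × Fin (k+2) => y p.1 p.2) (P i) :=
      fun y i => mlEvalS_homog_entry c g y i (i+1)
    -- base point
    have hbase : ∃ y, f y i0 ≠ 0 := by
      refine ⟨fun t i' => xh t i' (i' + g t), ?_⟩
      have hxh : (fun t => homogMat (g t) fun i' => xh t i' (i' + g t)) = xh := by
        funext t
        ext a b
        show (if b = a + g t then xh t a (a + g t) else 0) = xh t a b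
        by_cases hab : b = a + g t
        · rw [if_pos hab, hab]
        · rw [if_neg hab, (hxhmem t) a b hab]
      show (mlEvalS c fun t => homogMat (g t) fun i' => xh t i' (i' + g t)) i0 (i0+1) ≠ 0
      rw [hxh]
      exact hi0
    -- shifting
    have hshift : ∀ i : Fin (k+2), (∃ y, f y i ≠ 0) → ∃ y, f y (i+1) ≠ 0 := by
      rintro i ⟨y, hy⟩
      refine ⟨fun t i' => y t (i' - 1), ?_⟩
      set τ : Fin (k+2) ≃ Fin (k+2) := (Equiv.subRight (1 : Fin (k+2))).symm with hτ
      have hre := mlEvalS_map (Matrix.reindexAlgEquiv K K τ).toAlgHom c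
        (fun t => homogMat (g t) (y t))
      simp only [AlgEquiv.coe_algHom] at hre
      have hmat : (fun t => (Matrix.reindexAlgEquiv K K τ) (homogMat (g t) (y t)))
          = fun t => homogMat (g t) (fun i' => y t (i' - 1)) := by
        funext t
        rw [Matrix.reindexAlgEquiv_apply, hτ, homogMat_reindex]
      rw [hmat] at hre
      show (mlEvalS c fun t => homogMat (g t) fun i' => y t (i' - 1)) (i+1) (i+1+1) ≠ 0
      rw [← hre, Matrix.reindexAlgEquiv_apply, Matrix.reindex_apply, Matrix.submatrix_apply]
      have hs1 : τ.symm (i+1) = i := by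
        rw [hτ, Equiv.symm_symm, Equiv.subRight_apply, add_sub_cancel_right]
      have hs2 : τ.symm (i+1+1) = i+1 := by
        rw [hτ, Equiv.symm_symm, Equiv.subRight_apply, add_sub_cancel_right]
      rw [hs1, hs2]
      exact hy
    have hall : ∀ i : Fin (k+2), ∃ y, f y i ≠ 0 := by
      open Fin.NatCast in
      have hnat : ∀ d : ℕ, ∃ y, f y (i0 + (d : Fin (k+2))) ≠ 0 := by
        intro d
        induction d with
        | zero => simpa using hbase
        | succ d ih =>
            have hcast : i0 + ((d + 1 : ℕ) : Fin (k+2)) = (i0 + (d : Fin (k+2))) + 1 := by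
              push_cast
              rw [add_assoc]
            rw [hcast]
            exact hshift _ ih
      intro i
      have h := hnat ((i - i0).val)
      rwa [Fin.cast_val_eq_self, add_sub_cancel] at h
    have hPne : ∀ i, P i ≠ 0 := by
      intro i hPi
      obtain ⟨y, hy⟩ := hall i
      apply hy
      rw [heval, hPi, map_zero]
    have haeval_eq : ∀ (z : Fin m × Fin (k+2) → K) (q : MvPolynomial (Fin m × Fin (k+2)) K),
        MvPolynomial.aeval z q = MvPolynomial.eval z q := by
      intro z q
      rw [MvPolynomial.aeval_def, MvPolynomial.eval, ← MvPolynomial.coe_eval₂Hom,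
        Algebra.algebraMap_self]
    have hQ : (∏ i, P i) ≠ 0 := Finset.prod_ne_zero_iff.mpr fun i _ => hPne i
    have hzex : ∃ z : Fin m × Fin (k+2) → K, MvPolynomial.eval z (∏ i, P i) ≠ 0 := by
      by_contra hcon
      push_neg at hcon
      exact hQ (MvPolynomial.funext fun z => by rw [hcon z, map_zero])
    obtain ⟨z, hz⟩ := hzex
    have hfz : ∀ i, f (fun t i' => z (t, i')) i ≠ 0 := by
      intro i h0
      apply hz
      rw [map_prod]
      refine Finset.prod_eq_zero (Finset.mem_univ i) ?_
      rw [heval] at h0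
      rw [← haeval_eq]
      exact h0
    refine ⟨fun t => homogMat (g t) (fun i' => z (t, i')),
      ∏ i, (mlEvalS c fun t => homogMat (g t) (fun i' => z (t, i'))) i (i+1), ?_, ?_⟩
    · exact Finset.prod_ne_zero_iff.mpr fun i _ => hfz i
    · have hvD := mlEvalS_mem_Dsub c g (fun t => homogMat (g t) (fun i' => z (t, i')))
        (fun t => homogMat_mem _ _)
      rw [hg1] at hvD
      rw [hml]
      exact charpoly_shift _ (fun i j h => hvD i j h)
end

section
/- Let K be an infinite field and let p be a multilinear polynomial in m variables over K that neither vanishes identically on M_n(K) nor takes only scalar values on M_n(K). Then p takes on a value of degree n: there exist matrices a_1,…,a_m ∈ M_n(K) such that the minimal polynomial of p(a_1,…,a_m) has degree n. -/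
open Matrix
open Fin.NatCast Fin.CommRing

section MLHelpers

variable {m n : ℕ} {R : Type*} [CommRing R]

/-- Generic-ring version of `mlEval`. -/
noncomputable def mlEvalR (c : Equiv.Perm (Fin m) → R) (A : Fin m → Matrix (Fin n) (Fin n) R) :
    Matrix (Fin n) (Fin n) R :=
  ∑ σ : Equiv.Perm (Fin m), c σ • (List.ofFn fun k => A (σ k)).prod

lemma listprod_sandwich (P Q : Matrix (Fin n) (Fin n) R) (h : Q * P = 1) :
    ∀ l : List (Matrix (Fin n) (Fin n) R),
      (l.map fun a => P * a * Q).prod = P * l.prod * Q := by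
  intro l
  induction l with
  | nil => simp [mul_eq_one_comm.mp h]
  | cons a l ih =>
      simp only [List.map_cons, List.prod_cons, ih]
      rw [show P * a * Q * (P * l.prod * Q) = P * a * (Q * P) * l.prod * Q by
        simp only [Matrix.mul_assoc], h]
      simp [Matrix.mul_assoc]

lemma mlEvalR_conj (c : Equiv.Perm (Fin m) → R) (A : Fin m → Matrix (Fin n) (Fin n) R)
    (P Q : Matrix (Fin n) (Fin n) R) (h : Q * P = 1) :
    mlEvalR c (fun k => P * A k * Q) = P * mlEvalR c A * Q := by
  unfold mlEvalR
  rw [Finset.mul_sum, Finset.sum_mul]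
  refine Finset.sum_congr rfl fun σ _ => ?_
  rw [mul_smul_comm, smul_mul_assoc]
  congr 1
  have := listprod_sandwich P Q h (List.ofFn fun k => A (σ k))
  rw [List.map_ofFn] at this
  exact this

lemma mlEvalR_map {S : Type*} [CommRing S] (f : R →+* S)
    (c : Equiv.Perm (Fin m) → R) (A : Fin m → Matrix (Fin n) (Fin n) R) :
    (mlEvalR c A).map f = mlEvalR (fun σ => f (c σ)) (fun k => (A k).map f) := by
  unfold mlEvalR
  have hmm : ∀ M : Matrix (Fin n) (Fin n) R, M.map f = f.mapMatrix M := fun _ => rfl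
  rw [hmm, map_sum]
  refine Finset.sum_congr rfl fun σ _ => ?_
  have h1 : ∀ (r : R) (M : Matrix (Fin n) (Fin n) R),
      f.mapMatrix (r • M) = f r • f.mapMatrix M := by
    intro r M; ext a b
    simp [RingHom.mapMatrix_apply, Matrix.map_apply]
  rw [h1]
  congr 1
  rw [map_list_prod, List.map_ofFn]
  rfl

lemma mlEvalR_algEquiv (c : Equiv.Perm (Fin m) → R)
    (φ : Matrix (Fin n) (Fin n) R ≃ₐ[R] Matrix (Fin n) (Fin n) R)
    (A : Fin m → Matrix (Fin n) (Fin n) R) :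
    mlEvalR c (fun k => φ (A k)) = φ (mlEvalR c A) := by
  unfold mlEvalR
  rw [map_sum]
  refine Finset.sum_congr rfl fun σ _ => ?_
  rw [_root_.map_smul, map_list_prod, List.map_ofFn]
  rfl

variable {ι : Type*} [Fintype ι]

lemma listprod_expand : ∀ (m : ℕ) (x : Fin m → ι → R) (F : Fin m → ι → Matrix (Fin n) (Fin n) R),
    (List.ofFn fun k => ∑ p : ι, x k p • F k p).prod
      = ∑ t : Fin m → ι, (∏ k, x k (t k)) • (List.ofFn fun k => F k (t k)).prod := by
  intro m
  induction m with
  | zero =>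
      intro x F
      simp [List.ofFn_zero]
  | succ m ih =>
      intro x F
      rw [List.ofFn_succ, List.prod_cons]
      rw [ih (fun k => x k.succ) (fun k => F k.succ)]
      rw [Finset.sum_mul_sum]
      rw [← (Fin.consEquiv (fun _ : Fin (m+1) => ι)).sum_comp]
      rw [Fintype.sum_prod_type]
      refine Finset.sum_congr rfl fun p _ => Finset.sum_congr rfl fun t _ => ?_
      simp only [Fin.consEquiv_apply]
      rw [List.ofFn_succ, List.prod_cons, Fin.prod_univ_succ]
      simp only [Fin.cons_zero, Fin.cons_succ]
      rw [smul_mul_smul_comm]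

lemma mlEvalR_expand (c : Equiv.Perm (Fin m) → R) (x : Fin m → ι → R)
    (F : Fin m → ι → Matrix (Fin n) (Fin n) R) :
    mlEvalR c (fun k => ∑ p : ι, x k p • F k p)
      = ∑ t : Fin m → ι, (∏ k, x k (t k)) • mlEvalR c (fun k => F k (t k)) := by
  unfold mlEvalR
  have step : ∀ σ : Equiv.Perm (Fin m),
      c σ • (List.ofFn fun k => (fun k' => ∑ p : ι, x k' p • F k' p) (σ k)).prod
        = ∑ t : Fin m → ι,
            (∏ k, x k (t k)) • (c σ • (List.ofFn fun k => F (σ k) (t (σ k))).prod) := by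
    intro σ
    simp only
    rw [listprod_expand m (fun k => x (σ k)) (fun k => F (σ k)), Finset.smul_sum]
    have hb : Function.Bijective (fun t : Fin m → ι => t ∘ σ) :=
      (Equiv.arrowCongr σ.symm (Equiv.refl ι)).bijective
    rw [← Function.Bijective.sum_comp hb
      (fun t => c σ • ((∏ k, x (σ k) (t k)) • (List.ofFn fun k => F (σ k) (t k)).prod))]
    refine Finset.sum_congr rfl fun t _ => ?_
    simp only [Function.comp_apply]
    rw [Equiv.prod_comp σ (fun k => x k (t k)), smul_comm]
  rw [Finset.sum_congr rfl fun σ _ => step σ, Finset.sum_comm]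
  refine Finset.sum_congr rfl fun t _ => ?_
  rw [← Finset.smul_sum]

end MLHelpers

section Homog

variable {m n : ℕ} {R : Type*} [CommRing R] [NeZero n]

/-- Supported only on the diagonal shifted by `d`. -/
def HomogDeg (d : Fin n) (M : Matrix (Fin n) (Fin n) R) : Prop :=
  ∀ r s : Fin n, s ≠ r + d → M r s = 0

lemma homogDeg_one : HomogDeg (0 : Fin n) (1 : Matrix (Fin n) (Fin n) R) := by
  intro r s h
  rw [add_zero] at h
  exact Matrix.one_apply_ne (Ne.symm h)

lemma homogDeg_stdBasisMatrix (a b : Fin n) (x : R) :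
    HomogDeg (b - a) (Matrix.single a b x) := by
  intro r s h
  refine Matrix.single_apply_of_ne (i := a) (j := b) (c := x) (i' := r) (j' := s) ?_
  rintro ⟨rfl, rfl⟩
  exact h (by abel)

omit [NeZero n] in
lemma HomogDeg.smul {d : Fin n} {M : Matrix (Fin n) (Fin n) R} (h : HomogDeg d M) (x : R) :
    HomogDeg d (x • M) := fun r s hrs => by rw [Matrix.smul_apply, h r s hrs, smul_zero]

omit [NeZero n] in
lemma homogDeg_sum {d : Fin n} {ι : Type*} (s : Finset ι) {F : ι → Matrix (Fin n) (Fin n) R}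
    (h : ∀ i ∈ s, HomogDeg d (F i)) : HomogDeg d (∑ i ∈ s, F i) := fun r t hrt => by
  rw [Matrix.sum_apply]
  exact Finset.sum_eq_zero fun i hi => h i hi r t hrt

lemma HomogDeg.mul {d e : Fin n} {M N : Matrix (Fin n) (Fin n) R}
    (hM : HomogDeg d M) (hN : HomogDeg e N) : HomogDeg (d + e) (M * N) := by
  intro r s hrs
  rw [Matrix.mul_apply]
  refine Finset.sum_eq_zero fun t _ => ?_
  by_cases ht : t = r + d
  · rw [hN t s (by rw [ht]; rwa [add_assoc]), mul_zero]
  · rw [hM r t ht, zero_mul]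

lemma homogDeg_listProd : ∀ (l : ℕ) (dd : Fin l → Fin n) (F : Fin l → Matrix (Fin n) (Fin n) R),
    (∀ k, HomogDeg (dd k) (F k)) → HomogDeg (∑ k, dd k) (List.ofFn F).prod := by
  intro l
  induction l with
  | zero => intro dd F _; simpa using homogDeg_one
  | succ l ih =>
      intro dd F h
      rw [List.ofFn_succ, List.prod_cons]
      have := (h 0).mul (ih (fun k => dd k.succ) (fun k => F k.succ) (fun k => h k.succ))
      rwa [← Fin.sum_univ_succ] at this

lemma homogDeg_mlEvalR {d : Fin n} (c : Equiv.Perm (Fin m) → R)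
    {A : Fin m → Matrix (Fin n) (Fin n) R} (dd : Fin m → Fin n)
    (h : ∀ k, HomogDeg (dd k) (A k)) (hd : ∑ k, dd k = d) :
    HomogDeg d (mlEvalR c A) := by
  refine homogDeg_sum _ fun σ _ => HomogDeg.smul ?_ _
  have := homogDeg_listProd m (fun k => dd (σ k)) (fun k => A (σ k)) (fun k => h (σ k))
  rwa [Equiv.sum_comp σ dd, hd] at this

lemma HomogDeg.pow {M : Matrix (Fin n) (Fin n) R} (h : HomogDeg 1 M) :
    ∀ k : ℕ, HomogDeg (k : Fin n) (M ^ k) := by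
  intro k
  induction k with
  | zero => simpa using homogDeg_one
  | succ k ih =>
      have := ih.mul h
      rwa [← pow_succ, ← Nat.cast_add_one] at this

end Homog

section DiagConj

variable {n : ℕ} {R : Type*} [CommRing R]

lemma stdBasis_submatrix (e : Fin n ≃ Fin n) (a b : Fin n) (x : R) :
    (Matrix.single a b x).submatrix e.symm e.symm = Matrix.single (e a) (e b) x := by
  ext r s
  simp only [Matrix.submatrix_apply, Matrix.single, Matrix.of_apply]
  congr 1
  simp only [eq_iff_iff]
  constructor
  · rintro ⟨h1, h2⟩
    exact ⟨by rw [h1, Equiv.apply_symm_apply], by rw [h2, Equiv.apply_symm_apply]⟩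
  · rintro ⟨h1, h2⟩
    exact ⟨by rw [← h1, Equiv.symm_apply_apply], by rw [← h2, Equiv.symm_apply_apply]⟩

lemma unit_mul_diag (D : Matrix (Fin n) (Fin n) R) (hD : ∀ r s, r ≠ s → D r s = 0)
    (a b : Fin n) : Matrix.single a b (1:R) * D = D b b • Matrix.single a b (1:R) := by
  ext r s
  simp only [Matrix.mul_apply, Matrix.smul_apply, Matrix.single, Matrix.of_apply,
    ite_mul, one_mul, zero_mul, smul_eq_mul, mul_ite, mul_one, mul_zero]
  by_cases har : a = r
  · simp only [har, true_and]
    rw [Finset.sum_ite_eq]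
    simp only [Finset.mem_univ, if_true]
    by_cases hbs : b = s
    · subst hbs; simp
    · simp [hbs, hD b s hbs]
  · simp [har]

lemma diag_mul_unit (D : Matrix (Fin n) (Fin n) R) (hD : ∀ r s, r ≠ s → D r s = 0)
    (a b : Fin n) : D * Matrix.single a b (1:R) = D a a • Matrix.single a b (1:R) := by
  ext r s
  simp only [Matrix.mul_apply, Matrix.smul_apply, Matrix.single, Matrix.of_apply,
    ite_mul, one_mul, zero_mul, smul_eq_mul, mul_ite, mul_one, mul_zero]
  by_cases hbs : b = s
  · simp only [hbs, and_true]
    rw [Finset.sum_ite_eq]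
    simp only [Finset.mem_univ, if_true]
    by_cases har : a = r
    · subst har; simp
    · simp [har, hD r a (fun h => har h.symm)]
  · simp [hbs]

lemma diag_conj (D : Matrix (Fin n) (Fin n) R) (hD : ∀ r s, r ≠ s → D r s = 0)
    (a b : Fin n) (hab : a ≠ b) :
    (1 + Matrix.single a b (1:R)) * D * (1 - Matrix.single a b (1:R))
      = D + (D b b - D a a) • Matrix.single a b (1:R) := by
  have hEE : Matrix.single a b (1:R) * Matrix.single a b (1:R) = 0 := by
    rw [Matrix.single_mul_single_of_ne]
    exact Ne.symm hab
  rw [add_mul, one_mul, unit_mul_diag D hD a b, mul_sub, mul_one, add_mul,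
    diag_mul_unit D hD a b, smul_mul_assoc, hEE, smul_zero, sub_smul]
  abel

end DiagConj

section Endgame

variable {n : ℕ} {K : Type*} [Field K]

lemma minpoly_of_cycle [NeZero n] (v : Matrix (Fin n) (Fin n) K)
    (hvh : HomogDeg (1 : Fin n) v) (hv : ∀ r, v r (r + 1) ≠ 0) :
    (minpoly K v).natDegree = n := by
  have key : ∀ k : ℕ, (v ^ k) 0 ((k : Fin n)) ≠ 0 := by
    intro k
    induction k with
    | zero => simp
    | succ k ih =>
        rw [pow_succ, Matrix.mul_apply]
        rw [Finset.sum_eq_single ((k : Fin n))]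
        · have : ((k + 1 : ℕ) : Fin n) = (k : Fin n) + 1 := by push_cast; ring
          rw [this]
          exact mul_ne_zero ih (hv _)
        · intro t _ ht
          rw [hvh.pow k 0 t (by rwa [zero_add]), zero_mul]
        · simp
  have hint : IsIntegral K v := IsIntegral.of_finite K v
  have hmon := minpoly.monic hint
  set p := minpoly K v with hp
  have hle : p.natDegree ≤ n := by
    refine le_trans (Polynomial.natDegree_le_of_dvd (Matrix.minpoly_dvd_charpoly v)
      (Matrix.charpoly_monic v).ne_zero) ?_
    rw [Matrix.charpoly_natDegree_eq_dim, Fintype.card_fin]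
  rcases lt_or_eq_of_le hle with hlt | heq
  · exfalso
    set d := p.natDegree with hd
    have h0 : Polynomial.aeval v p = 0 := minpoly.aeval K v
    rw [Polynomial.aeval_eq_sum_range] at h0
    have h1 := congrArg (fun M : Matrix (Fin n) (Fin n) K => M 0 ((d : Fin n))) h0
    simp only [Matrix.sum_apply, Matrix.smul_apply, Matrix.zero_apply, smul_eq_mul] at h1
    rw [Finset.sum_range_succ] at h1
    have h2 : ∀ i ∈ Finset.range d, p.coeff i * (v ^ i) 0 ((d : Fin n)) = 0 := by
      intro i hi
      rw [Finset.mem_range] at hi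
      have hne : ((d : Fin n)) ≠ 0 + (i : Fin n) := by
        rw [zero_add]
        intro hcontra
        have := congrArg Fin.val hcontra
        rw [Fin.val_natCast, Fin.val_natCast, Nat.mod_eq_of_lt hlt,
          Nat.mod_eq_of_lt (lt_trans hi hlt)] at this
        omega
      rw [hvh.pow i 0 _ hne, mul_zero]
    rw [Finset.sum_eq_zero h2, zero_add, hmon.coeff_natDegree, one_mul] at h1
    exact key d h1
  · exact heq

end Endgame

/-- If `K` is an infinite field and the multilinear polynomial `p` neither vanishes
identically on `M_n(K)` nor takes only scalar values on `M_n(K)`, then `p` takes a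
value of degree `n`: a value whose minimal polynomial has degree `n`. -/
theorem exists_value_of_degree_n
    {K : Type*} [Field K] [Infinite K] {m n : ℕ}
    (c : Equiv.Perm (Fin m) → K)
    (hnz : ∃ A : Fin m → Matrix (Fin n) (Fin n) K, mlEval c A ≠ 0)
    (hns : ∃ A : Fin m → Matrix (Fin n) (Fin n) K,
      ∀ lam : K, mlEval c A ≠ lam • (1 : Matrix (Fin n) (Fin n) K)) :
    ∃ A : Fin m → Matrix (Fin n) (Fin n) K, (minpoly K (mlEval c A)).natDegree = n := by
  have hml : ∀ A : Fin m → Matrix (Fin n) (Fin n) K, mlEval c A = mlEvalR c A := fun _ => rfl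
  -- dispose of n = 0
  rcases Nat.eq_zero_or_pos n with rfl | hn0
  · obtain ⟨A, hA⟩ := hnz
    exact absurd (Subsingleton.elim _ _) hA
  rcases eq_or_lt_of_le (Nat.succ_le_of_lt hn0) with h1 | hn2
  · -- n = 1
    refine ⟨fun _ => 0, ?_⟩
    have h1' : n = 1 := h1.symm
    subst h1'
    set M := mlEval c fun _ => (0 : Matrix (Fin 1) (Fin 1) K)
    have hM : M = algebraMap K (Matrix (Fin 1) (Fin 1) K) (M 0 0) := by
      ext r s
      fin_cases r; fin_cases s
      simp [Matrix.algebraMap_matrix_apply]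
    rw [hM, minpoly.eq_X_sub_C_of_algebraMap_inj _ (fun x y h => by
      simpa [Matrix.algebraMap_matrix_apply] using congrFun (congrFun h 0) 0)]
    exact Polynomial.natDegree_X_sub_C _
  -- main case : 2 ≤ n
  haveI : NeZero n := ⟨by omega⟩
  have h01 : (0 : Fin n) ≠ 1 := by
    intro h
    have h2 := congrArg Fin.val h
    rw [Fin.val_zero, Fin.val_one', Nat.mod_eq_of_lt hn2] at h2
    omega
  clear hnz
  obtain ⟨A0, hA0⟩ := hns
  -- Step 1 : a value with a nonzero off-diagonal entry
  have hB : ∃ (B : Fin m → Matrix (Fin n) (Fin n) K) (a b : Fin n),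
      a ≠ b ∧ (mlEvalR c B) a b ≠ 0 := by
    by_cases hdiag : ∀ r s, r ≠ s → (mlEvalR c A0) r s = 0
    · have hd2 : ∃ a b, (mlEvalR c A0) a a ≠ (mlEvalR c A0) b b := by
        by_contra h
        push_neg at h
        refine hA0 ((mlEvalR c A0) 0 0) ?_
        rw [hml]
        ext r s
        by_cases hrs : r = s
        · subst hrs
          rw [Matrix.smul_apply, Matrix.one_apply_eq, smul_eq_mul, mul_one]
          exact h r 0
        · rw [hdiag r s hrs, Matrix.smul_apply, Matrix.one_apply_ne hrs, smul_zero]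
      obtain ⟨a, b, hab'⟩ := hd2
      have hab : a ≠ b := fun h => hab' (by rw [h])
      refine ⟨fun k => (1 + Matrix.single a b (1:K)) * A0 k * (1 - Matrix.single a b (1:K)),
        a, b, hab, ?_⟩
      have hQP : (1 - Matrix.single a b (1:K)) * (1 + Matrix.single a b (1:K)) = 1 := by
        have hEE : Matrix.single a b (1:K) * Matrix.single a b (1:K) = 0 := by
          rw [Matrix.single_mul_single_of_ne]
          exact Ne.symm hab
        rw [sub_mul, mul_add, mul_add, one_mul, mul_one, hEE]
        simp
      rw [mlEvalR_conj c A0 _ _ hQP, diag_conj _ hdiag a b hab]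
      rw [Matrix.add_apply, hdiag a b hab, zero_add, Matrix.smul_apply,
        Matrix.single_apply_same, smul_eq_mul, mul_one]
      exact sub_ne_zero_of_ne (Ne.symm hab')
    · push_neg at hdiag
      obtain ⟨r, s, hrs, h⟩ := hdiag
      exact ⟨A0, r, s, hrs, h⟩
  obtain ⟨B, a, b, hab, hBab⟩ := hB
  -- Step 2 : expansion into matrix units : some unit tuple has nonzero (a,b) entry
  have hBrep : ∀ k, (∑ p : Fin n × Fin n,
      B k p.1 p.2 • Matrix.single p.1 p.2 (1:K)) = B k := by
    intro k
    rw [Fintype.sum_prod_type]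
    conv_rhs => rw [Matrix.matrix_eq_sum_single (B k)]
    simp [Matrix.smul_single]
  have hexp := mlEvalR_expand c (fun k (p : Fin n × Fin n) => B k p.1 p.2)
      (fun _ p => Matrix.single p.1 p.2 (1:K))
  rw [show (fun k => ∑ p : Fin n × Fin n, B k p.1 p.2 • Matrix.single p.1 p.2 (1:K)) = B
    from funext hBrep] at hexp
  rw [hexp] at hBab
  rw [Matrix.sum_apply] at hBab
  obtain ⟨t, _, ht⟩ := Finset.exists_ne_zero_of_sum_ne_zero hBab
  rw [Matrix.smul_apply] at ht
  have hU : (mlEvalR c fun k => Matrix.single (t k).1 (t k).2 (1:K)) a b ≠ 0 := by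
    intro h
    rw [h, smul_zero] at ht
    exact ht rfl
  set i0 : Fin m → Fin n := fun k => (t k).1 with hi0
  set j0 : Fin m → Fin n := fun k => (t k).2 with hj0
  -- Step 3 : relabel so that (a,b) ↦ (0,1)
  set π : Equiv.Perm (Fin n) :=
    (Equiv.swap a 0).trans (Equiv.swap ((Equiv.swap a 0) b) 1) with hπ
  have hb' : (0 : Fin n) ≠ (Equiv.swap a 0) b := fun h =>
    hab ((Equiv.swap a 0).injective ((Equiv.swap_apply_left a 0).trans h))
  have hπa : π a = 0 := by
    rw [hπ]
    simp only [Equiv.trans_apply, Equiv.swap_apply_left]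
    exact Equiv.swap_apply_of_ne_of_ne hb' h01
  have hπb : π b = 1 := by
    rw [hπ]
    simp only [Equiv.trans_apply, Equiv.swap_apply_left]
  set i' : Fin m → Fin n := fun k => π (i0 k) with hi'
  set j' : Fin m → Fin n := fun k => π (j0 k) with hj'
  set V : Matrix (Fin n) (Fin n) K :=
    mlEvalR c fun k => Matrix.single (i' k) (j' k) (1:K) with hV
  have hV01 : V 0 1 ≠ 0 := by
    have hφ := mlEvalR_algEquiv c (Matrix.reindexAlgEquiv K K π)
      (fun k => Matrix.single (i0 k) (j0 k) (1:K))
    have harg : (fun k => (Matrix.reindexAlgEquiv K K π)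
        (Matrix.single (i0 k) (j0 k) (1:K)))
        = fun k => Matrix.single (i' k) (j' k) (1:K) := by
      funext k
      rw [Matrix.reindexAlgEquiv_apply, Matrix.reindex_apply, stdBasis_submatrix]
    rw [harg] at hφ
    rw [hV, hφ]
    rw [Matrix.reindexAlgEquiv_apply, Matrix.reindex_apply, Matrix.submatrix_apply]
    have h1 : π.symm 0 = a := by rw [← hπa, Equiv.symm_apply_apply]
    have h2 : π.symm 1 = b := by rw [← hπb, Equiv.symm_apply_apply]
    rw [h1, h2]
    exact hU
  -- Step 4 : homogeneity degree is 1
  have hVdeg : HomogDeg (∑ k, (j' k - i' k)) V :=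
    homogDeg_mlEvalR c (fun k => j' k - i' k)
      (fun k => homogDeg_stdBasisMatrix _ _ _) rfl
  have hw : (∑ k, (j' k - i' k)) = 1 := by
    by_contra hne
    exact hV01 (hVdeg 0 1 (by rw [zero_add]; exact fun h => hne h.symm))
  -- Step 5 : generic shifted tuple
  set Rp := MvPolynomial (Fin m × Fin n) K with hRp
  set T : Fin m → Matrix (Fin n) (Fin n) Rp := fun k =>
    ∑ u : Fin n, (MvPolynomial.X (k, u) : Rp) • Matrix.single (i' k + u) (j' k + u) (1:Rp) with hT
  set W : Matrix (Fin n) (Fin n) Rp := mlEvalR (fun σ => MvPolynomial.C (c σ)) T with hW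
  have hWdeg : HomogDeg (1 : Fin n) W := by
    rw [← hw]
    refine homogDeg_mlEvalR _ (fun k => j' k - i' k) (fun k => ?_) rfl
    refine homogDeg_sum _ fun u _ => ?_
    have := (homogDeg_stdBasisMatrix (R := Rp) (i' k + u) (j' k + u) 1).smul
      (MvPolynomial.X (k, u))
    have heq : (j' k + u) - (i' k + u) = j' k - i' k := by abel
    rwa [heq] at this
  -- evaluation of W
  have hevalW : ∀ x : (Fin m × Fin n) → K, W.map (MvPolynomial.eval x)
      = mlEvalR c (fun k => ∑ u : Fin n,
          x (k, u) • Matrix.single (i' k + u) (j' k + u) (1:K)) := by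
    intro x
    rw [hW, mlEvalR_map (MvPolynomial.eval x : Rp →+* K)]
    have hc : (fun σ => MvPolynomial.eval x (MvPolynomial.C (c σ))) = c :=
      funext fun σ => MvPolynomial.eval_C _
    rw [hc]
    have hA : (fun k => (T k).map ⇑(MvPolynomial.eval x))
        = fun k => ∑ u : Fin n, x (k, u) • Matrix.single (i' k + u) (j' k + u) (1:K) := by
      funext k
      rw [hT]
      ext r s
      simp only [Matrix.map_apply, Matrix.sum_apply, Matrix.smul_apply, smul_eq_mul,
        map_sum, _root_.map_mul]
      refine Finset.sum_congr rfl fun u _ => ?_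
      rw [MvPolynomial.eval_X]
      congr 1
      simp only [Matrix.single, Matrix.of_apply]
      split_ifs <;> simp
    rw [hA]
  -- each superdiagonal entry of W is a nonzero polynomial
  have hPr : ∀ r : Fin n, W r (r + 1) ≠ 0 := by
    intro r hzero
    have h1 : (W.map (MvPolynomial.eval (fun p : Fin m × Fin n =>
        if p.2 = r then (1:K) else 0))) r (r + 1) = 0 := by
      rw [Matrix.map_apply, hzero, map_zero]
    rw [hevalW] at h1
    have harg : (fun k => ∑ u : Fin n,
        (if (((k, u) : Fin m × Fin n)).2 = r then (1:K) else 0)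
          • Matrix.single (i' k + u) (j' k + u) (1:K))
        = fun k => (Matrix.reindexAlgEquiv K K (Equiv.addRight r))
            (Matrix.single (i' k) (j' k) (1:K)) := by
      funext k
      rw [Matrix.reindexAlgEquiv_apply, Matrix.reindex_apply, stdBasis_submatrix]
      rw [Finset.sum_eq_single r]
      · simp [Equiv.addRight]
      · intro u _ hu
        simp [hu]
      · simp
    rw [harg, mlEvalR_algEquiv] at h1
    rw [Matrix.reindexAlgEquiv_apply, Matrix.reindex_apply, Matrix.submatrix_apply] at h1
    have h2 : (Equiv.addRight r).symm r = 0 := by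
      simp [Equiv.addRight]
    have h3 : (Equiv.addRight r).symm (r + 1) = 1 := by
      simp [Equiv.addRight]
    rw [h2, h3] at h1
    exact hV01 h1
  -- Step 6 : choose a good evaluation point
  have hProd : (∏ r : Fin n, W r (r + 1)) ≠ 0 :=
    Finset.prod_ne_zero_iff.mpr fun r _ => hPr r
  obtain ⟨x, hx⟩ : ∃ x : (Fin m × Fin n) → K,
      MvPolynomial.eval x (∏ r : Fin n, W r (r + 1)) ≠ 0 := by
    by_contra h
    push_neg at h
    exact hProd (MvPolynomial.funext fun y => by rw [h y, map_zero])
  rw [map_prod] at hx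
  have hx' : ∀ r : Fin n, MvPolynomial.eval x (W r (r + 1)) ≠ 0 := by
    intro r
    exact Finset.prod_ne_zero_iff.mp hx r (Finset.mem_univ r)
  -- Step 7 : conclude
  refine ⟨fun k => ∑ u : Fin n, x (k, u) • Matrix.single (i' k + u) (j' k + u) (1:K), ?_⟩
  have hveq : mlEval c (fun k => ∑ u : Fin n,
      x (k, u) • Matrix.single (i' k + u) (j' k + u) (1:K)) = W.map (MvPolynomial.eval x) := by
    rw [hml, hevalW]
  rw [hveq]
  refine minpoly_of_cycle _ ?_ ?_
  · intro r s hrs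
    rw [Matrix.map_apply, hWdeg r s hrs, map_zero]
  · intro r
    rw [Matrix.map_apply]
    exact hx' r
end
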